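/- arXiv:1705.06402 — 9 statements merged into one kernel-verified Lean document; each statement's English description precedes it below -/
import Mathlib

section
/- For every positive integer m, C_3(m) = ∑_{D=1}^{m} (−1)^{m−D} D^{m+2} / ((m−D)! · D!) = binom(m+3, 4) + 2·binom(m+2, 4), where binom(a,b) denotes the binomial coefficient (a choose b). -/
open Finset

private def fS (n m : ℕ) : ℚ :=
  ∑ D ∈ Finset.range (m+1),
    (-1 : ℚ) ^ (m - D) * (D : ℚ) ^ n / ((m - D).factorial * D.factorial)

private lemma factQ_ne (k : ℕ) : ((k.factorial : ℚ)) ≠ 0 := by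
  exact_mod_cast k.factorial_ne_zero

private lemma fS_rec (n m : ℕ) : fS (n+1) (m+1) = (m+1) * fS n (m+1) + fS n m := by
  have key : fS (n+1) (m+1) - (m+1) * fS n (m+1) = fS n m := by
    unfold fS
    rw [Finset.mul_sum, ← Finset.sum_sub_distrib, Finset.sum_range_succ]
    have hlast :
        (-1 : ℚ) ^ (m+1 - (m+1)) * ((m+1 : ℕ) : ℚ) ^ (n+1) /
            ((m+1 - (m+1)).factorial * ((m+1 : ℕ)).factorial)
          - ((m:ℚ)+1) * ((-1 : ℚ) ^ (m+1 - (m+1)) * ((m+1 : ℕ) : ℚ) ^ n /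
            ((m+1 - (m+1)).factorial * ((m+1 : ℕ)).factorial)) = 0 := by
      push_cast
      rw [Nat.sub_self]
      simp [pow_succ]
      ring
    rw [hlast, add_zero]
    apply Finset.sum_congr rfl
    intro D hD
    rw [Finset.mem_range] at hD
    have hDm : D ≤ m := Nat.lt_succ_iff.mp hD
    have h1 : m + 1 - D = (m - D) + 1 := by omega
    rw [h1, Nat.factorial_succ]
    have hMD : ((m - D : ℕ) : ℚ) = (m : ℚ) - (D : ℚ) := by
      have h2 : (D : ℕ) + (m - D) = m := by omega
      have h3 := congrArg (Nat.cast : ℕ → ℚ) h2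
      push_cast at h3
      linarith
    push_cast
    rw [pow_succ, pow_succ, hMD]
    have e1 := factQ_ne (m - D)
    have e2 := factQ_ne D
    have hDle : (D : ℚ) ≤ (m : ℚ) := by exact_mod_cast hDm
    have e3 : ((m : ℚ) - (D : ℚ)) + 1 ≠ 0 := by intro h; nlinarith
    field_simp
    ring
  linarith [key]

private lemma fS_zero_succ (m : ℕ) : fS 0 (m+1) = 0 := by
  unfold fS
  have h : ∀ D ∈ Finset.range (m+2),
      (-1 : ℚ) ^ (m+1 - D) * (D : ℚ) ^ 0 / ((m+1 - D).factorial * D.factorial)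
        = ((-1 : ℚ) ^ (m+1) / ((m+1).factorial : ℚ)) *
            ((-1 : ℚ) ^ D * ((m+1).choose D : ℚ)) := by
    intro D hD
    rw [Finset.mem_range] at hD
    have hDm : D ≤ m + 1 := Nat.lt_succ_iff.mp hD
    have hfac : ((m+1).choose D : ℚ) * (D.factorial : ℚ) * ((m+1-D).factorial : ℚ)
        = ((m+1).factorial : ℚ) := by
      exact_mod_cast congrArg (Nat.cast : ℕ → ℚ)
        (Nat.choose_mul_factorial_mul_factorial hDm)
    have h2 : (-1 : ℚ) ^ D * (-1 : ℚ) ^ D = 1 := by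
      rw [← pow_add]
      exact Even.neg_one_pow ⟨D, rfl⟩
    have hsign : (-1 : ℚ) ^ (m+1 - D) = (-1 : ℚ) ^ (m+1) * (-1 : ℚ) ^ D := by
      have h3 : (-1 : ℚ) ^ (m+1-D) * (-1 : ℚ) ^ D = (-1 : ℚ) ^ (m+1) := by
        rw [← pow_add]
        congr 1
        omega
      calc (-1 : ℚ) ^ (m+1-D) = (-1 : ℚ) ^ (m+1-D) * ((-1:ℚ)^D * (-1:ℚ)^D) := by
            rw [h2, mul_one]
        _ = (-1 : ℚ) ^ (m+1) * (-1 : ℚ) ^ D := by rw [← mul_assoc, h3]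
    rw [hsign, pow_zero, mul_one]
    have e1 := factQ_ne (m+1-D)
    have e2 := factQ_ne D
    have e3 := factQ_ne (m+1)
    field_simp
    linear_combination (-1:ℚ) * hfac
  rw [Finset.sum_congr rfl h, ← Finset.mul_sum]
  have halt : (∑ D ∈ Finset.range (m+2), (-1 : ℚ) ^ D * ((m+1).choose D : ℚ)) = 0 := by
    have hz := Int.alternating_sum_range_choose (n := m+1)
    rw [if_neg (Nat.succ_ne_zero m)] at hz
    have := congrArg (Int.cast : ℤ → ℚ) hz
    push_cast at this
    convert this using 2
  rw [halt, mul_zero]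

private lemma fS_lt : ∀ n m : ℕ, n < m → fS n m = 0 := by
  intro n
  induction n with
  | zero =>
    intro m hm
    obtain ⟨m', rfl⟩ := Nat.exists_eq_add_of_lt hm
    simpa using fS_zero_succ (0 + m')
  | succ n ih =>
    intro m hm
    obtain ⟨m', hm'⟩ : ∃ m', m = m' + 1 := ⟨m - 1, by omega⟩
    subst hm'
    rw [fS_rec, ih (m'+1) (by omega), ih m' (by omega)]
    ring

private lemma fS_diag : ∀ m : ℕ, fS m m = 1 := by
  intro m
  induction m with
  | zero => simp [fS]
  | succ m ih =>
    rw [fS_rec, fS_lt m (m+1) (by omega), ih]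
    ring

private lemma fS_one : ∀ m : ℕ, fS (m+1) m = (m : ℚ) * (m+1) / 2 := by
  intro m
  induction m with
  | zero => simp [fS]
  | succ m ih =>
    rw [fS_rec, fS_diag, ih]
    push_cast
    ring

private lemma fS_two : ∀ m : ℕ, fS (m+2) m = (m : ℚ) * (m+1) * (m+2) * (3*m+1) / 24 := by
  intro m
  induction m with
  | zero => simp [fS]
  | succ m ih =>
    rw [show m + 1 + 2 = (m + 2) + 1 by ring, fS_rec, fS_one, ih]
    push_cast
    ring

private lemma choose2 (n : ℕ) : (((n+1).choose 2 : ℕ) : ℚ) = n * (n+1) / 2 := by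
  induction n with
  | zero => simp
  | succ n ih =>
    rw [Nat.choose_succ_succ (n+1) 1]
    push_cast [Nat.choose_one_right]
    linear_combination ih

private lemma choose3 (n : ℕ) : (((n+1).choose 3 : ℕ) : ℚ) = ((n:ℚ) - 1) * n * (n+1) / 6 := by
  induction n with
  | zero => norm_num [Nat.choose]
  | succ n ih =>
    rw [Nat.choose_succ_succ (n+1) 2]
    push_cast
    linear_combination ih + choose2 n

private lemma choose4 (n : ℕ) : (((n+2).choose 4 : ℕ) : ℚ) = ((n:ℚ) - 1) * n * (n+1) * (n+2) / 24 := by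
  induction n with
  | zero => norm_num [Nat.choose]
  | succ n ih =>
    rw [show n + 1 + 2 = (n + 2) + 1 by ring, Nat.choose_succ_succ (n+2) 3]
    push_cast
    have h3 := choose3 (n+1)
    push_cast at h3
    linear_combination ih + h3

/-- `C_3(m) = ∑_{D=1}^m (−1)^{m−D} D^{m+2} / ((m−D)!·D!)
= (m+3 choose 4) + 2·(m+2 choose 4)`. -/
theorem stmt5 (m : ℕ) (hm : 1 ≤ m) :
    ∑ D ∈ Finset.Icc 1 m,
        ((-1 : ℚ)) ^ (m - D) * (D : ℚ) ^ (m + 2) / ((m - D).factorial * D.factorial) =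
      ((m + 3).choose 4 : ℚ) + 2 * ((m + 2).choose 4 : ℚ) := by
  have hsum : ∑ D ∈ Finset.Icc 1 m,
        ((-1 : ℚ)) ^ (m - D) * (D : ℚ) ^ (m + 2) / ((m - D).factorial * D.factorial)
      = fS (m+2) m := by
    unfold fS
    apply Finset.sum_subset
    · intro x hx
      rw [Finset.mem_Icc] at hx
      rw [Finset.mem_range]
      omega
    · intro x hx hnx
      rw [Finset.mem_range] at hx
      rw [Finset.mem_Icc] at hnx
      have : x = 0 := by omega
      subst this
      simp [pow_succ]
  rw [hsum, fS_two]
  rw [show m + 3 = (m+1) + 2 by ring, choose4 (m+1), choose4 m]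
  push_cast
  ring
end

section
/- For every positive integer m, C_4(m) = ∑_{D=1}^{m} (−1)^{m−D} D^{m+3} / ((m−D)! · D!) = binom(m+5, 6) + 8·binom(m+4, 6) + 6·binom(m+3, 6), where binom(a,b) denotes the binomial coefficient (a choose b). -/
open Finset

/-- Auxiliary sum: `A n m = ∑_{D=1}^m (-1)^(m-D) D^n / ((m-D)! D!)`. -/
def Asum (n m : ℕ) : ℚ :=
  ∑ D ∈ Finset.Icc 1 m,
    ((-1 : ℚ)) ^ (m - D) * (D : ℚ) ^ n / ((m - D).factorial * D.factorial)

lemma Asum_one (n : ℕ) : Asum n 1 = 1 := by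
  simp [Asum]

/-- Stirling-type recurrence. -/
lemma Asum_rec (n M : ℕ) :
    Asum (n + 1) (M + 1) = Asum n M + (M + 1 : ℚ) * Asum n (M + 1) := by
  have key : ∀ D ∈ Finset.Icc 1 (M + 1),
      (M + 1 : ℚ) * ((-1 : ℚ) ^ (M + 1 - D) * (D : ℚ) ^ n /
          ((M + 1 - D).factorial * D.factorial)) =
        ((-1 : ℚ) ^ (M + 1 - D) * ((M + 1 - D : ℕ) : ℚ) * (D : ℚ) ^ n /
          ((M + 1 - D).factorial * D.factorial))
        + ((-1 : ℚ) ^ (M + 1 - D) * (D : ℚ) ^ (n + 1) /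
          ((M + 1 - D).factorial * D.factorial)) := by
    intro D hD
    simp only [Finset.mem_Icc] at hD
    have hc : ((M + 1 - D : ℕ) : ℚ) = (M : ℚ) + 1 - (D : ℚ) := by
      push_cast [Nat.cast_sub hD.2]
      ring
    rw [hc, pow_succ]
    ring
  have h1 : (M + 1 : ℚ) * Asum n (M + 1) =
      (∑ D ∈ Finset.Icc 1 (M + 1),
        (-1 : ℚ) ^ (M + 1 - D) * ((M + 1 - D : ℕ) : ℚ) * (D : ℚ) ^ n /
          ((M + 1 - D).factorial * D.factorial))
      + Asum (n + 1) (M + 1) := by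
    rw [Asum, Finset.mul_sum, Finset.sum_congr rfl key, Finset.sum_add_distrib, Asum]
  have h2 : (∑ D ∈ Finset.Icc 1 (M + 1),
      (-1 : ℚ) ^ (M + 1 - D) * ((M + 1 - D : ℕ) : ℚ) * (D : ℚ) ^ n /
        ((M + 1 - D).factorial * D.factorial)) = - Asum n M := by
    rw [Finset.sum_Icc_succ_top (by omega : 1 ≤ M + 1)]
    simp only [Nat.sub_self, Nat.cast_zero, mul_zero, zero_mul, zero_div, add_zero]
    rw [Asum, ← Finset.sum_neg_distrib]
    refine Finset.sum_congr rfl ?_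
    intro D hD
    simp only [Finset.mem_Icc] at hD
    have e1 : M + 1 - D = (M - D) + 1 := by omega
    rw [e1, pow_succ, Nat.factorial_succ]
    have hne : ((M - D + 1 : ℕ) : ℚ) ≠ 0 := by positivity
    push_cast
    field_simp
  linarith [h1, h2]

lemma Asum_zero_exp (M : ℕ) : Asum 0 (M + 1) = (-1 : ℚ) ^ M / (M + 1).factorial := by
  have hb : (∑ D ∈ Finset.range (M + 2), (-1 : ℚ) ^ D * ((M + 1).choose D : ℚ)) = 0 := by
    have := Int.alternating_sum_range_choose_of_ne (n := M + 1) (by omega)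
    exact_mod_cast congrArg (fun z : ℤ => (z : ℚ)) this
  have hsplit : Finset.range (M + 2) = insert 0 (Finset.Icc 1 (M + 1)) := by
    ext x; simp [Finset.mem_range, Finset.mem_Icc]; omega
  have h0 : (∑ D ∈ Finset.Icc 1 (M + 1), (-1 : ℚ) ^ D * ((M + 1).choose D : ℚ)) = -1 := by
    have := hb
    rw [hsplit, Finset.sum_insert (by simp)] at this
    simp only [pow_zero, one_mul, Nat.choose_zero_right, Nat.cast_one] at this
    linarith
  -- rewrite Asum 0 in terms of choose
  have hterm : ∀ D ∈ Finset.Icc 1 (M + 1),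
      (-1 : ℚ) ^ (M + 1 - D) * (D : ℚ) ^ 0 / ((M + 1 - D).factorial * D.factorial) =
        ((-1 : ℚ) ^ (M + 1) / (M + 1).factorial) * ((-1 : ℚ) ^ D * ((M + 1).choose D : ℚ)) := by
    intro D hD
    simp only [Finset.mem_Icc] at hD
    have hfac : ((M + 1).choose D : ℚ) * (D.factorial : ℚ) * ((M + 1 - D).factorial : ℚ)
        = ((M + 1).factorial : ℚ) := by
      exact_mod_cast congrArg (fun z : ℕ => (z : ℚ))
        (Nat.choose_mul_factorial_mul_factorial hD.2)
    have hsign : (-1 : ℚ) ^ (M + 1 - D) * (-1 : ℚ) ^ D = (-1 : ℚ) ^ (M + 1) := by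
      rw [← pow_add]
      congr 1
      omega
    have hd1 : ((D.factorial : ℚ)) ≠ 0 := by positivity
    have hd2 : (((M + 1 - D).factorial : ℚ)) ≠ 0 := by positivity
    have hd3 : (((M + 1).factorial : ℚ)) ≠ 0 := by positivity
    field_simp
    rw [← hsign]
    rw [← hfac]
    have hDD : ((-1 : ℚ) ^ D) ^ 2 = 1 := by
      rw [← pow_mul, mul_comm, pow_mul]; norm_num
    linear_combination (-((-1 : ℚ) ^ (M + 1 - D) * ((M + 1).choose D : ℚ) *
      (((M + 1 - D).factorial : ℚ)) * ((D.factorial : ℚ)))) * hDD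
  rw [Asum, Finset.sum_congr rfl hterm, ← Finset.mul_sum, h0]
  rw [pow_succ]
  field_simp

lemma Asum_lt : ∀ M m : ℕ, M + 1 < m → Asum (M + 1) m = 0 := by
  intro M
  induction M with
  | zero =>
    intro m hm
    obtain ⟨k, rfl⟩ : ∃ k, m = k + 2 := ⟨m - 2, by omega⟩
    have := Asum_rec 0 (k + 1)
    rw [Asum_zero_exp k, Asum_zero_exp (k + 1)] at this
    rw [this]
    have h1 : ((k + 1).factorial : ℚ) ≠ 0 := by positivity
    have h2 : ((k + 2).factorial : ℚ) ≠ 0 := by positivity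
    have hstep : ((k + 2).factorial : ℚ) = (k + 2) * (k + 1).factorial := by
      push_cast [Nat.factorial_succ (k + 1)]
      ring
    rw [pow_succ, hstep]
    field_simp
    push_cast
    ring
  | succ M ih =>
    intro m hm
    obtain ⟨j, rfl⟩ : ∃ j, m = j + 1 := ⟨m - 1, by omega⟩
    have hrec := Asum_rec (M + 1) j
    rw [ih j (by omega), ih (j + 1) (by omega)] at hrec
    simpa using hrec

lemma Asum_diag : ∀ M : ℕ, Asum (M + 1) (M + 1) = 1 := by
  intro M
  induction M with
  | zero => exact Asum_one 1
  | succ M ih =>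
    have hrec := Asum_rec (M + 1) (M + 1)
    rw [ih, Asum_lt M (M + 2) (by omega)] at hrec
    rw [hrec]
    ring

lemma Asum_p2 : ∀ M : ℕ, Asum (M + 2) (M + 1) = (M + 1 : ℚ) * (M + 2) / 2 := by
  intro M
  induction M with
  | zero =>
    rw [Asum_one 2]; norm_num
  | succ M ih =>
    have hrec := Asum_rec (M + 2) (M + 1)
    rw [ih, show Asum (M + 2) (M + 2) = 1 from Asum_diag (M + 1)] at hrec
    rw [show Asum (M + 1 + 2) (M + 1 + 1) = Asum (M + 3) (M + 2) from rfl, hrec]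
    push_cast
    ring

lemma Asum_p3 : ∀ M : ℕ, Asum (M + 3) (M + 1) =
    (M + 1 : ℚ) * (M + 2) * (M + 3) * (3 * M + 4) / 24 := by
  intro M
  induction M with
  | zero =>
    rw [Asum_one 3]; norm_num
  | succ M ih =>
    have hrec := Asum_rec (M + 3) (M + 1)
    rw [ih, show Asum (M + 3) (M + 2) = (M + 2 : ℚ) * (M + 3) / 2 from by
        have := Asum_p2 (M + 1); push_cast at this ⊢; linarith] at hrec
    rw [show Asum (M + 1 + 3) (M + 1 + 1) = Asum (M + 4) (M + 2) from rfl, hrec]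
    push_cast
    ring

lemma Asum_p4 : ∀ M : ℕ, Asum (M + 4) (M + 1) =
    (M + 1 : ℚ) ^ 2 * (M + 2) ^ 2 * (M + 3) * (M + 4) / 48 := by
  intro M
  induction M with
  | zero =>
    rw [Asum_one 4]; norm_num
  | succ M ih =>
    have hrec := Asum_rec (M + 4) (M + 1)
    rw [ih, show Asum (M + 4) (M + 2) =
        (M + 2 : ℚ) * (M + 3) * (M + 4) * (3 * M + 7) / 24 from by
          have := Asum_p3 (M + 1); push_cast at this ⊢; linarith] at hrec
    rw [show Asum (M + 1 + 4) (M + 1 + 1) = Asum (M + 5) (M + 2) from rfl, hrec]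
    push_cast
    ring

lemma choose6 (k : ℕ) : (((k + 6).choose 6 : ℕ) : ℚ) =
    (k + 1 : ℚ) * (k + 2) * (k + 3) * (k + 4) * (k + 5) * (k + 6) / 720 := by
  have h : (k + 6).descFactorial 6 =
      (k + 1) * (k + 2) * (k + 3) * (k + 4) * (k + 5) * (k + 6) := by
    simp [Nat.descFactorial_succ, Nat.descFactorial_zero,
      show k + 6 - 1 = k + 5 from by omega, show k + 6 - 2 = k + 4 from by omega,
      show k + 6 - 3 = k + 3 from by omega, show k + 6 - 4 = k + 2 from by omega,
      show k + 6 - 5 = k + 1 from by omega]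
    ring
  have h2 := Nat.descFactorial_eq_factorial_mul_choose (k + 6) 6
  rw [h] at h2
  have h3 : ((k + 1) * (k + 2) * (k + 3) * (k + 4) * (k + 5) * (k + 6) : ℚ)
      = 720 * ((k + 6).choose 6 : ℚ) := by
    exact_mod_cast congrArg (fun z : ℕ => (z : ℚ)) h2
  linarith [h3]

/-- `C_4(m) = ∑_{D=1}^m (−1)^{m−D} D^{m+3} / ((m−D)!·D!)
= (m+5 choose 6) + 8·(m+4 choose 6) + 6·(m+3 choose 6)`. -/
theorem stmt6 (m : ℕ) (hm : 1 ≤ m) :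
    ∑ D ∈ Finset.Icc 1 m,
        ((-1 : ℚ)) ^ (m - D) * (D : ℚ) ^ (m + 3) / ((m - D).factorial * D.factorial) =
      ((m + 5).choose 6 : ℚ) + 8 * ((m + 4).choose 6 : ℚ) + 6 * ((m + 3).choose 6 : ℚ) := by
  obtain ⟨M, rfl⟩ : ∃ M, m = M + 1 := ⟨m - 1, by omega⟩
  have hL : (∑ D ∈ Finset.Icc 1 (M + 1),
      ((-1 : ℚ)) ^ (M + 1 - D) * (D : ℚ) ^ (M + 1 + 3) /
        ((M + 1 - D).factorial * D.factorial)) = Asum (M + 4) (M + 1) := rfl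
  rw [hL, Asum_p4 M]
  match M with
  | 0 => norm_num [Nat.choose]
  | 1 => norm_num [Nat.choose]
  | (K + 2) =>
    rw [show K + 2 + 1 + 5 = (K + 2) + 6 from by omega,
        show K + 2 + 1 + 4 = (K + 1) + 6 from by omega,
        show K + 2 + 1 + 3 = K + 6 from by omega,
        choose6 (K + 2), choose6 (K + 1), choose6 K]
    push_cast
    ring
end

section
/- For every real number x with 0 ≤ x < 1, the series ∑_{D=1}^{∞} (D^{D−1}/D!)·(x·e^{−x})^D converges and its sum equals x. -/
open Finset Real
open scoped NNReal ENNReal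

namespace Stmt7Aux

noncomputable def cc : ℕ → ℝ
  | 0 => 0
  | (n+1) => ((n+1 : ℕ) : ℝ) ^ n / (n+1).factorial

lemma cc_nonneg (n : ℕ) : 0 ≤ cc n := by
  cases n with
  | zero => simp [cc]
  | succ n => exact div_nonneg (by positivity) (by positivity)

lemma pow_div_factorial_le_exp {x : ℝ} (hx : 0 ≤ x) (n : ℕ) :
    x ^ n / n.factorial ≤ Real.exp x := by
  calc x ^ n / n.factorial
      ≤ ∑ i ∈ range (n+1), x ^ i / i.factorial :=
        Finset.single_le_sum (f := fun i => x ^ i / (i.factorial : ℝ))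
          (fun i _ => by positivity) (self_mem_range_succ n)
    _ ≤ Real.exp x := Real.sum_le_exp_of_nonneg hx _

lemma cc_le (n : ℕ) : cc n ≤ Real.exp 1 ^ n * Real.exp 1 := by
  cases n with
  | zero => simp [cc]; positivity
  | succ n =>
      have h1 : ((n+1 : ℕ) : ℝ) ^ (n+1) / (n+1).factorial ≤ Real.exp ((n:ℝ)+1) := by
        have := pow_div_factorial_le_exp (x := ((n+1 : ℕ) : ℝ)) (by positivity) (n+1)
        push_cast at this ⊢
        exact this
      have h2 : cc (n+1) = ((n+1 : ℕ) : ℝ) ^ (n+1) / (n+1).factorial / ((n:ℝ)+1) := by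
        simp only [cc]
        rw [pow_succ]
        push_cast
        field_simp
      have h3 : Real.exp ((n:ℝ)+1) = Real.exp 1 ^ (n+1) := by
        rw [← Real.exp_nat_mul]
        push_cast; ring_nf
      have h4 : cc (n+1) ≤ Real.exp ((n:ℝ)+1) := by
        rw [h2]
        refine le_trans (div_le_self ?_ ?_) h1
        · positivity
        · have : (0:ℝ) ≤ n := Nat.cast_nonneg n
          linarith
      calc cc (n+1) ≤ Real.exp ((n:ℝ)+1) := h4
        _ = Real.exp 1 ^ (n+1) := h3
        _ ≤ Real.exp 1 ^ (n+1) * Real.exp 1 :=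
            le_mul_of_one_le_right (by positivity) (by nlinarith [Real.exp_one_gt_d9])

end Stmt7Aux

namespace Stmt7Aux

lemma summable_cc {t : ℝ} (ht : |t| * Real.exp 1 < 1) :
    Summable (fun n => cc n * t ^ n) := by
  have h0 : 0 ≤ |t| * Real.exp 1 := by positivity
  refine Summable.of_norm (Summable.of_nonneg_of_le (fun n => norm_nonneg _)
    (fun n => ?_) (((summable_geometric_of_lt_one h0 ht)).mul_left (Real.exp 1)))
  have : ‖cc n * t ^ n‖ = cc n * |t| ^ n := by
    rw [norm_mul, norm_pow, Real.norm_eq_abs, Real.norm_eq_abs,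
      abs_of_nonneg (cc_nonneg n)]
  rw [this]
  calc cc n * |t| ^ n ≤ (Real.exp 1 ^ n * Real.exp 1) * |t| ^ n :=
        mul_le_mul_of_nonneg_right (cc_le n) (by positivity)
    _ = Real.exp 1 * (|t| * Real.exp 1) ^ n := by rw [mul_pow]; ring

/-- the formal power series with coefficients `cc` -/
noncomputable def P : FormalMultilinearSeries ℝ ℝ ℝ :=
  FormalMultilinearSeries.ofScalars ℝ cc

/-- the tree function -/
noncomputable def F : ℝ → ℝ := P.sum

lemma F_eq {t : ℝ} : F t = ∑' n, cc n * t ^ n := by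
  have := FormalMultilinearSeries.ofScalars_sum_eq (𝕜 := ℝ) (E := ℝ) cc t
  simpa [F, P, FormalMultilinearSeries.ofScalarsSum, smul_eq_mul] using this

lemma radius_ge : (Real.toNNReal (Real.exp 1)⁻¹ : ENNReal) ≤ P.radius := by
  apply FormalMultilinearSeries.le_radius_of_bound _ (Real.exp 1)
  intro n
  have hn : ‖P n‖ = cc n := by
    rw [P, FormalMultilinearSeries.ofScalars_norm, Real.norm_eq_abs,
      abs_of_nonneg (cc_nonneg n)]
  rw [hn]
  have hc : ((Real.toNNReal (Real.exp 1)⁻¹ : ℝ≥0) : ℝ) = (Real.exp 1)⁻¹ := by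
    rw [Real.coe_toNNReal]
    positivity
  rw [hc]
  calc cc n * ((Real.exp 1)⁻¹) ^ n
      ≤ (Real.exp 1 ^ n * Real.exp 1) * ((Real.exp 1)⁻¹) ^ n :=
        mul_le_mul_of_nonneg_right (cc_le n) (by positivity)
    _ = Real.exp 1 := by
        rw [mul_comm (Real.exp 1 ^ n) (Real.exp 1), mul_assoc, ← mul_pow,
          mul_inv_cancel₀ (by positivity), one_pow, mul_one]

lemma analyticAt_F {t : ℝ} (ht : |t| * Real.exp 1 < 1) : AnalyticAt ℝ F t := by
  have hrad : (0:ENNReal) < P.radius := by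
    refine lt_of_lt_of_le ?_ radius_ge
    exact ENNReal.coe_pos.mpr (Real.toNNReal_pos.mpr (by positivity))
  have hmem : t ∈ Metric.eball (0:ℝ) P.radius := by
    rw [Metric.mem_eball, edist_zero_right]
    refine lt_of_lt_of_le ?_ radius_ge
    rw [enorm_eq_nnnorm, ENNReal.coe_lt_coe, ← NNReal.coe_lt_coe, coe_nnnorm, Real.norm_eq_abs,
      Real.coe_toNNReal _ (by positivity)]
    rw [inv_eq_one_div, lt_div_iff₀ (Real.exp_pos 1)]
    exact ht
  exact (P.hasFPowerSeriesOnBall hrad).analyticAt_of_mem hmem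

end Stmt7Aux

namespace Stmt7Aux

lemma hasSum_F {t : ℝ} (ht : |t| * Real.exp 1 < 1) :
    HasSum (fun n => cc (n+1) * t ^ (n+1)) (F t) := by
  have hs : HasSum (fun n => cc n * t ^ n) (F t) := by
    have := (summable_cc ht).hasSum
    rwa [← F_eq] at this
  have := (hasSum_nat_add_iff' (f := fun n => cc n * t ^ n) (g := F t) 1).mpr hs
  simpa [cc] using this

open scoped fwdDiff in
lemma fwdDiff_pow_eq_zero : ∀ (k n : ℕ), k < n → ∀ y : ℕ,
    (fwdDiff (1:ℕ))^[n] (fun x : ℕ => (x:ℝ)^k) y = 0 := by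
  intro k
  induction k using Nat.strong_induction_on with
  | _ k ih =>
    intro n hn y
    obtain ⟨n, rfl⟩ : ∃ m, n = m + 1 := ⟨n - 1, by omega⟩
    rw [Function.iterate_succ_apply]
    have hΔ : Δ_[(1:ℕ)] (fun x : ℕ => (x:ℝ)^k)
        = ∑ j ∈ range k, (k.choose j : ℝ) • (fun x : ℕ => (x:ℝ)^j) := by
      funext x
      simp only [fwdDiff, Finset.sum_apply, Pi.smul_apply, smul_eq_mul]
      push_cast
      rw [add_pow, Finset.sum_range_succ]
      simp only [one_pow, mul_one, Nat.choose_self, Nat.cast_one]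
      rw [add_sub_cancel_right]
      exact Finset.sum_congr rfl fun j _ => by ring
    rw [hΔ, fwdDiff_iter_finset_sum]
    rw [Finset.sum_apply]
    apply Finset.sum_eq_zero
    intro j hj
    rw [fwdDiff_iter_const_smul]
    have hj' : j < k := Finset.mem_range.mp hj
    rw [Pi.smul_apply, ih j hj' n (by omega) y, smul_zero]

end Stmt7Aux

namespace Stmt7Aux

set_option maxRecDepth 8000 in
lemma coeff_id (N : ℕ) :
    ∑ n ∈ range (N+1), cc n * ((-(n:ℝ))^(N-n) / (N-n).factorial)
      = if N = 1 then 1 else 0 := by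
  match N with
  | 0 => simp [cc]
  | 1 => simp [Finset.sum_range_succ, cc]
  | (M+2) =>
    set N := M + 2 with hN
    have h0 : (fwdDiff (1:ℕ))^[N] (fun x : ℕ => (x:ℝ)^(N-1)) 0 = 0 :=
      fwdDiff_pow_eq_zero (N-1) N (by omega) 0
    have h1 := fwdDiff_iter_eq_sum_shift (1:ℕ) (fun x : ℕ => (x:ℝ)^(N-1)) N 0
    rw [h0] at h1
    have key : ∀ n ∈ range (N+1), cc n * ((-(n:ℝ))^(N-n) / (N-n).factorial)
        = ((((-1:ℤ)^(N-n) * (N.choose n : ℤ)) • ((n:ℝ)^(N-1))) / N.factorial) := by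
      intro n hn
      have hnN : n ≤ N := by simpa using Nat.lt_succ_iff.mp (Finset.mem_range.mp hn)
      match n with
      | 0 =>
        simp [cc, zero_pow (show N - 1 ≠ 0 by omega)]
      | (m+1) =>
        have hfact : (N.choose (m+1)) * (m+1).factorial * (N-(m+1)).factorial
            = N.factorial := Nat.choose_mul_factorial_mul_factorial hnN
        have hpow : ((m+1:ℕ):ℝ)^m * ((m+1:ℕ):ℝ)^(N-(m+1)) = ((m+1:ℕ):ℝ)^(N-1) := by
          rw [← pow_add]; congr 1; omega
        simp only [cc, zsmul_eq_mul]
        rw [neg_pow]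
        push_cast
        have hf1 : ((m+1).factorial : ℝ) ≠ 0 := by positivity
        have hf2 : ((N-(m+1)).factorial : ℝ) ≠ 0 := by positivity
        have hf3 : (N.factorial : ℝ) ≠ 0 := by positivity
        field_simp
        push_cast at hpow
        have hfactR : ((N.choose (m+1)) : ℝ) * ((m+1).factorial : ℝ)
            * ((N-(m+1)).factorial : ℝ) = (N.factorial : ℝ) := by exact_mod_cast hfact
        simp only [show N - 1 = M + 1 from rfl] at hpow ⊢
        push_cast at hpow hfactR ⊢
        linear_combination ((N.factorial:ℝ)) * hpow
          - (((m:ℝ)+1)^(M+1)) * hfactR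
    rw [Finset.sum_congr rfl key]
    rw [← Finset.sum_div]
    rw [if_neg (by omega)]
    have h2 : ∑ n ∈ range (N+1), (((-1:ℤ)^(N-n) * (N.choose n : ℤ)) • ((n:ℝ)^(N-1)))
        = 0 := by
      have := h1.symm
      simpa using this
    rw [h2, zero_div]

end Stmt7Aux

namespace Stmt7Aux

lemma exp_hasSum (z : ℝ) : HasSum (fun m => z ^ m / m.factorial) (Real.exp z) := by
  rw [Real.exp_eq_exp_ℝ]
  exact NormedSpace.expSeries_div_hasSum_exp z

lemma local_id {y : ℝ} (hy : |y| * Real.exp (1 + |y|) < 1) :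
    F (y * Real.exp (-y)) = y := by
  set b : ℕ × ℕ → ℝ :=
    fun p => cc p.1 * y ^ p.1 * ((-(p.1:ℝ) * y) ^ p.2 / p.2.factorial) with hb
  -- fiberwise sums
  have hfiber : ∀ n : ℕ, HasSum (fun m => b (n, m))
      (cc n * y ^ n * Real.exp (-(n:ℝ) * y)) :=
    fun n => (exp_hasSum (-(n:ℝ) * y)).mul_left _
  -- summability of |b|
  have habs : Summable (fun p => |b p|) := by
    rw [summable_prod_of_nonneg (fun p => abs_nonneg _)]
    constructor
    · intro n
      exact ((exp_hasSum ((n:ℝ) * |y|)).summable.mul_left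
        (cc n * |y| ^ n)).congr (fun mm : ℕ => by
          rw [hb]
          simp only [abs_mul, abs_div, abs_pow, abs_neg, abs_abs,
            Nat.abs_cast, abs_of_nonneg (cc_nonneg n),
            abs_of_nonneg (Nat.cast_nonneg (α := ℝ) mm.factorial), mul_pow]
          try ring)
    · have hsum : ∀ n : ℕ, (∑' m, |b (n, m)|)
          = cc n * |y| ^ n * Real.exp ((n:ℝ) * |y|) := by
        intro n
        have hfe : (fun m : ℕ => |b (n, m)|)
            = fun m : ℕ => cc n * |y| ^ n * (((n:ℝ) * |y|) ^ m / m.factorial) := by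
          funext mm
          rw [hb]
          simp only [abs_mul, abs_div, abs_pow, abs_neg, abs_abs,
            Nat.abs_cast, abs_of_nonneg (cc_nonneg n),
            abs_of_nonneg (Nat.cast_nonneg (α := ℝ) mm.factorial), mul_pow]
          try ring
        have : HasSum (fun m => |b (n, m)|)
            (cc n * |y| ^ n * Real.exp ((n:ℝ) * |y|)) := by
          rw [hfe]
          exact (exp_hasSum ((n:ℝ) * |y|)).mul_left _
        exact this.tsum_eq
      simp only [hsum]
      have h0 : 0 ≤ |y| * Real.exp (1 + |y|) := by positivity
      refine Summable.of_nonneg_of_le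
        (fun n => by have := cc_nonneg n; positivity) (fun n => ?_)
        ((summable_geometric_of_lt_one h0 hy).mul_left (Real.exp 1))
      calc cc n * |y| ^ n * Real.exp ((n:ℝ) * |y|)
          ≤ (Real.exp 1 ^ n * Real.exp 1) * |y| ^ n * Real.exp ((n:ℝ) * |y|) := by
            have h1 : (0:ℝ) ≤ |y| ^ n := by positivity
            have h2 : (0:ℝ) < Real.exp ((n:ℝ) * |y|) := Real.exp_pos _
            exact mul_le_mul_of_nonneg_right
              (mul_le_mul_of_nonneg_right (cc_le n) h1) h2.le
        _ = Real.exp 1 * (|y| * Real.exp (1 + |y|)) ^ n := by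
            rw [Real.exp_nat_mul, Real.exp_add]
            ring
  have hbsum : Summable b := habs.of_abs
  -- total sum equals F t
  have htot : HasSum b (F (y * Real.exp (-y))) := by
    have h1 : HasSum (fun n => cc n * y ^ n * Real.exp (-(n:ℝ) * y))
        (∑' p, b p) := hbsum.hasSum.prod_fiberwise hfiber
    have h2 : (fun n => cc n * y ^ n * Real.exp (-(n:ℝ) * y))
        = (fun n => cc n * (y * Real.exp (-y)) ^ n) := by
      funext n
      rw [mul_pow, ← Real.exp_nat_mul]
      ring_nf
    rw [h2] at h1
    have ht' : |y * Real.exp (-y)| * Real.exp 1 < 1 := by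
      rw [abs_mul, abs_of_pos (Real.exp_pos _)]
      calc |y| * Real.exp (-y) * Real.exp 1 ≤ |y| * Real.exp |y| * Real.exp 1 := by
            have h := Real.exp_le_exp.mpr (neg_le_abs y)
            exact mul_le_mul_of_nonneg_right
              (mul_le_mul_of_nonneg_left h (abs_nonneg y)) (Real.exp_pos 1).le
        _ = |y| * Real.exp (1 + |y|) := by rw [Real.exp_add]; ring
        _ < 1 := hy
    have h3 : HasSum (fun n => cc n * (y * Real.exp (-y)) ^ n)
        (F (y * Real.exp (-y))) := by
      have := (summable_cc ht').hasSum
      rwa [← F_eq] at this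
    exact (h1.unique h3) ▸ hbsum.hasSum
  -- regroup along antidiagonals
  have hsig : HasSum (fun q : (N : ℕ) × {p // p ∈ Finset.HasAntidiagonal.antidiagonal N} => b q.2)
      (F (y * Real.exp (-y))) := by
    have := (Finset.HasAntidiagonal.sigmaAntidiagonalEquivProd (A := ℕ)).hasSum_iff.mpr htot
    exact this
  have hgrp : HasSum (fun N => ∑ p ∈ Finset.HasAntidiagonal.antidiagonal N, b p)
      (F (y * Real.exp (-y))) := by
    refine hsig.sigma (fun N => ?_)
    have := hasSum_fintype (fun p : {p // p ∈ Finset.HasAntidiagonal.antidiagonal N} => b p.1)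
    convert this using 1
    exact (Finset.sum_attach _ _).symm
  -- compute the antidiagonal sums
  have hdiag : ∀ N : ℕ, ∑ p ∈ Finset.HasAntidiagonal.antidiagonal N, b p
      = if N = 1 then y else 0 := by
    intro N
    rw [Finset.Nat.sum_antidiagonal_eq_sum_range_succ_mk]
    have hterm : ∀ n ∈ range (N+1),
        b (n, N - n) = (cc n * ((-(n:ℝ))^(N-n) / (N-n).factorial)) * y ^ N := by
      intro n hn
      have hnN : n ≤ N := by
        have := Finset.mem_range.mp hn; omega
      rw [hb]
      simp only
      rw [mul_pow]
      have hyp : y ^ n * y ^ (N-n) = y ^ N := by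
        rw [← pow_add]; congr 1; omega
      rw [show cc n * y ^ n * ((-(n:ℝ))^(N-n) * y^(N-n) / (N-n).factorial)
          = (cc n * ((-(n:ℝ))^(N-n) / (N-n).factorial)) * (y ^ n * y ^ (N-n)) from by
        ring]
      rw [hyp]
    rw [Finset.sum_congr rfl hterm, ← Finset.sum_mul, coeff_id N]
    by_cases hN1 : N = 1
    · subst hN1; simp
    · simp [hN1]
  rw [funext hdiag] at hgrp
  exact hgrp.unique (hasSum_ite_eq 1 y)

end Stmt7Aux

namespace Stmt7Aux

lemma exp98_lt : Real.exp (9/8 : ℝ) < 8 := by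
  have h1 : Real.exp (9/8 : ℝ) < Real.exp 2 := Real.exp_lt_exp.mpr (by norm_num)
  have h2 : Real.exp (2:ℝ) = Real.exp 1 * Real.exp 1 := by
    rw [← Real.exp_add]; norm_num
  nlinarith [Real.exp_one_lt_d9, Real.exp_pos (1:ℝ)]

lemma ineq1 {y : ℝ} (hy : y ∈ Set.Ioo (-(1/8):ℝ) 1) :
    |y * Real.exp (-y)| * Real.exp 1 < 1 := by
  obtain ⟨hy1, hy2⟩ := hy
  have hrw : |y * Real.exp (-y)| * Real.exp 1 = |y| * Real.exp (1 - y) := by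
    rw [abs_mul, abs_of_pos (Real.exp_pos _), mul_assoc, ← Real.exp_add]
    ring_nf
  rw [hrw]
  rcases le_or_gt 0 y with h0 | h0
  · rw [abs_of_nonneg h0]
    have hlt : y < Real.exp (y - 1) := by
      have hne : y - 1 ≠ 0 := sub_ne_zero.mpr (ne_of_lt hy2)
      have := Real.add_one_lt_exp hne
      linarith
    calc y * Real.exp (1 - y) < Real.exp (y - 1) * Real.exp (1 - y) :=
          mul_lt_mul_of_pos_right hlt (Real.exp_pos _)
      _ = 1 := by rw [← Real.exp_add]; norm_num
  · rw [abs_of_neg h0]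
    have h1 : 1 - y < 9/8 := by linarith
    have h2 : Real.exp (1 - y) < 8 := lt_trans (Real.exp_lt_exp.mpr h1) exp98_lt
    have h3 : -y < 1/8 := by linarith
    nlinarith [Real.exp_pos (1 - y)]

lemma ineq2 {y : ℝ} (hy : |y| < 1/8) : |y| * Real.exp (1 + |y|) < 1 := by
  have h1 : 1 + |y| < 9/8 := by linarith
  have h2 : Real.exp (1 + |y|) < 8 := lt_trans (Real.exp_lt_exp.mpr h1) exp98_lt
  nlinarith [abs_nonneg y, Real.exp_pos (1 + |y|)]

end Stmt7Aux

open Stmt7Aux in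
/-- for `0 ≤ x < 1`, `∑_{D=1}^∞ (D^{D−1}/D!)·(x·e^{−x})^D = x`
(the series converges with this sum).  Here the series is indexed by `n : ℕ`
with `D = n + 1`. -/
theorem stmt7 (x : ℝ) (hx0 : 0 ≤ x) (hx1 : x < 1) :
    HasSum
      (fun n : ℕ =>
        ((n + 1 : ℕ) ^ ((n + 1) - 1) / (n + 1).factorial : ℝ) *
          (x * Real.exp (-x)) ^ (n + 1))
      x := by
  have hx8 : x ∈ Set.Ioo (-(1/8):ℝ) 1 := ⟨by linarith, hx1⟩
  have hU : AnalyticOnNhd ℝ (fun y => F (y * Real.exp (-y)))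
      (Set.Ioo (-(1/8):ℝ) 1) := by
    intro y hy
    have h1 : AnalyticAt ℝ F (y * Real.exp (-y)) := analyticAt_F (ineq1 hy)
    have h2 : AnalyticAt ℝ (fun y : ℝ => y * Real.exp (-y)) y :=
      (analyticAt_id).mul ((analyticAt_id).neg.rexp)
    have := AnalyticAt.comp (g := F) (f := fun y : ℝ => y * Real.exp (-y))
      (x := y) h1 h2
    exact this
  have heq : Set.EqOn (fun y => F (y * Real.exp (-y))) (fun y => y)
      (Set.Ioo (-(1/8):ℝ) 1) := by
    apply AnalyticOnNhd.eqOn_of_preconnected_of_eventuallyEq hU analyticOnNhd_id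
      (convex_Ioo _ _).isPreconnected (z₀ := 0) (by norm_num)
    have hball : ∀ y ∈ Metric.ball (0:ℝ) (1/8), F (y * Real.exp (-y)) = y := by
      intro y hy
      exact local_id (ineq2 (by simpa [Real.dist_eq] using hy))
    exact Filter.eventuallyEq_of_mem (Metric.ball_mem_nhds 0 (by norm_num)) hball
  have hFx : F (x * Real.exp (-x)) = x := heq hx8
  have h := hasSum_F (ineq1 hx8)
  rw [hFx] at h
  have hfun : (fun n : ℕ =>
        ((n + 1 : ℕ) ^ ((n + 1) - 1) / (n + 1).factorial : ℝ) *
          (x * Real.exp (-x)) ^ (n + 1))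
      = fun n : ℕ => cc (n+1) * (x * Real.exp (-x)) ^ (n+1) := by
    funext n
    simp only [cc, Nat.add_sub_cancel]
    try push_cast
    try ring
  rw [hfun]
  exact h
end

section
/- For every real number x with 0 ≤ x < 1, the series ∑_{D=1}^{∞} (D^{D}/D!)·(x·e^{−x})^D converges and its sum equals x/(1−x). -/
open Finset Real fwdDiff

lemma fwdDiff_pow_fn (j : ℕ) :
    fwdDiff (1:ℕ) (fun x : ℕ => (x:ℝ)^j) =
      ∑ i ∈ range j, (fun x : ℕ => (j.choose i : ℝ) * (x:ℝ)^i) := by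
  funext y
  have h := add_pow (y:ℝ) 1 j
  simp only [one_pow, mul_one] at h
  simp only [fwdDiff, Finset.sum_apply]
  push_cast
  rw [h, Finset.sum_range_succ]
  simp [Nat.choose_self, mul_comm]

lemma fwdDiff_iter_pow (N : ℕ) : ∀ j ≤ N,
    (fwdDiff (1:ℕ))^[N] (fun x : ℕ => (x:ℝ)^j) =
      fun _ => if j = N then (N.factorial : ℝ) else 0 := by
  induction N with
  | zero =>
    intro j hj
    interval_cases j
    simp
  | succ N IH =>
    intro j hj
    rw [Function.iterate_succ_apply, fwdDiff_pow_fn, fwdDiff_iter_finset_sum]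
    have step : ∀ i ∈ range j,
        (fwdDiff (1:ℕ))^[N] (fun x : ℕ => (j.choose i : ℝ) * (x:ℝ)^i)
          = fun _ => (j.choose i : ℝ) * (if i = N then (N.factorial : ℝ) else 0) := by
      intro i hi
      have hiN : i ≤ N := by
        have := Finset.mem_range.1 hi
        omega
      have : (fun x : ℕ => (j.choose i : ℝ) * (x:ℝ)^i)
          = (j.choose i : ℝ) • (fun x : ℕ => (x:ℝ)^i) := by
        funext z; simp [smul_eq_mul]
      rw [this, fwdDiff_iter_const_smul, IH i hiN]
      funext z; simp [smul_eq_mul]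
    rw [Finset.sum_congr rfl step]
    funext z
    simp only [Finset.sum_apply]
    by_cases hjN : j = N + 1
    · subst hjN
      rw [Finset.sum_eq_single N]
      · simp only [if_pos rfl, Nat.choose_succ_self_right, Nat.factorial_succ, if_pos]
        push_cast; ring
      · intro b _ hb; simp [hb]
      · intro h; exact absurd (Finset.self_mem_range_succ N) h
    · have hjN' : j ≤ N := by omega
      rw [Finset.sum_eq_zero]
      · simp [hjN]
      · intro i hi
        have : i < N := lt_of_lt_of_le (Finset.mem_range.1 hi) hjN'
        simp [Nat.ne_of_lt this]

lemma alt_sum_pow (N : ℕ) :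
    ∑ k ∈ range (N + 1), (-1:ℝ)^(N - k) * (N.choose k) * (k:ℝ)^N
      = (N.factorial : ℝ) := by
  have h := fwdDiff_iter_eq_sum_shift (1:ℕ) (fun x : ℕ => (x:ℝ)^N) N 0
  rw [fwdDiff_iter_pow N N le_rfl] at h
  simp only [if_pos rfl, smul_eq_mul, zero_add, if_true, eq_self_iff_true] at h
  rw [show (N.factorial : ℝ) = (if True then (N.factorial:ℝ) else 0) by simp, h]
  apply Finset.sum_congr rfl
  intro k _
  simp only [zsmul_eq_mul]
  push_cast
  ring

lemma coeff_one (n : ℕ) :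
    ∑ p ∈ Finset.HasAntidiagonal.antidiagonal n,
      (((p.1 + 1 : ℕ) : ℝ) ^ (p.1 + 1) / (p.1 + 1).factorial) *
        ((-((p.1 : ℝ) + 1)) ^ p.2 / p.2.factorial) = 1 := by
  rw [Finset.Nat.sum_antidiagonal_eq_sum_range_succ_mk]
  have key := alt_sum_pow (n + 1)
  rw [Finset.sum_range_succ'] at key
  simp only [Nat.cast_zero, zero_pow (Nat.succ_ne_zero n), mul_zero, add_zero,
    Nat.succ_sub_succ] at key
  have hterm : ∀ d ∈ range (n + 1),
      (((d + 1 : ℕ) : ℝ) ^ (d + 1) / (d + 1).factorial) *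
        ((-((d : ℝ) + 1)) ^ (n - d) / (n - d).factorial)
      = ((-1:ℝ)^(n - d) * ((n+1).choose (d+1)) * ((d+1:ℕ):ℝ)^(n+1)) / ((n+1).factorial) := by
    intro d hd
    have hdn : d ≤ n := by have := Finset.mem_range.1 hd; omega
    have hfact : ((n + 1).factorial : ℝ)
        = ((n+1).choose (d+1)) * ((d+1).factorial) * ((n-d).factorial) := by
      have := Nat.choose_mul_factorial_mul_factorial (Nat.succ_le_succ hdn)
      rw [Nat.succ_sub_succ] at this
      exact_mod_cast this.symm
    have hpow : ((d:ℝ) + 1) ^ (n + 1) = ((d:ℝ) + 1) ^ (d + 1) * ((d:ℝ) + 1) ^ (n - d) := by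
      rw [← pow_add, show d + 1 + (n - d) = n + 1 from by omega]
    push_cast
    rw [neg_pow, hpow, hfact]
    have h1 : ((d+1).factorial : ℝ) ≠ 0 := Nat.cast_ne_zero.2 (Nat.factorial_ne_zero _)
    have h2 : ((n-d).factorial : ℝ) ≠ 0 := Nat.cast_ne_zero.2 (Nat.factorial_ne_zero _)
    have h3 : (((n+1).choose (d+1)) : ℝ) ≠ 0 :=
      Nat.cast_ne_zero.2 (Nat.choose_pos (Nat.succ_le_succ hdn)).ne'
    field_simp
  rw [Finset.sum_congr rfl hterm, ← Finset.sum_div, key, div_self]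
  exact Nat.cast_ne_zero.2 (Nat.factorial_ne_zero _)

noncomputable def cc : ℕ → ℝ := fun D => if D = 0 then 0 else (D:ℝ)^D / D.factorial

lemma cc_succ (n : ℕ) : cc (n+1) = ((n+1:ℕ):ℝ)^(n+1) / (n+1).factorial := by
  simp [cc]

lemma cc_nonneg (D : ℕ) : 0 ≤ cc D := by
  unfold cc; split
  · exact le_rfl
  · positivity

lemma cc_le (D : ℕ) : cc D ≤ exp 1 ^ D := by
  unfold cc
  split
  · positivity
  · calc (D:ℝ)^D / D.factorial
        ≤ ∑ i ∈ range (D+1), (D:ℝ)^i / i.factorial := by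
          exact Finset.single_le_sum (f := fun i => (D:ℝ)^i / i.factorial)
            (fun i _ => by positivity) (Finset.self_mem_range_succ D)
      _ ≤ exp (D:ℝ) := Real.sum_le_exp_of_nonneg (Nat.cast_nonneg D) (D+1)
      _ = exp 1 ^ D := by rw [← Real.exp_nat_mul, mul_one]

lemma exp54 : exp (5/4 : ℝ) < 4 := by
  have h9 : exp 1 < 2.7182818286 := Real.exp_one_lt_d9
  have h4 : exp (5/4 : ℝ) ^ 4 < 4 ^ 4 := by
    have e1 : exp (5/4 : ℝ) ^ 4 = exp 1 ^ 5 := by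
      rw [← Real.exp_nat_mul, ← Real.exp_nat_mul]
      norm_num
    rw [e1]
    calc exp 1 ^ 5 < 2.7182818286 ^ 5 := by
          apply pow_lt_pow_left₀ h9 (exp_pos 1).le
          norm_num
      _ < 4 ^ 4 := by norm_num
  exact lt_of_pow_lt_pow_left₀ 4 (by norm_num) h4

lemma wlt {x : ℝ} (h1 : -4⁻¹ < x) (h2 : x < 1) : |x * exp (-x)| < exp (-1) := by
  rcases le_or_gt 0 x with hx | hx
  · rw [abs_of_nonneg (mul_nonneg hx (exp_pos _).le)]
    have hxe : x < exp (x - 1) := by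
      have := Real.add_one_lt_exp (x := x - 1) (sub_ne_zero.2 h2.ne)
      linarith
    calc x * exp (-x) < exp (x - 1) * exp (-x) := by
          apply mul_lt_mul_of_pos_right hxe (exp_pos _)
      _ = exp (-1) := by rw [← Real.exp_add]; ring_nf
  · have hw : x * exp (-x) < 0 := mul_neg_of_neg_of_pos hx (exp_pos _)
    rw [abs_of_neg hw]
    have hnx : -x < 4⁻¹ := by linarith
    have hnx0 : 0 < -x := by linarith
    have key : exp 4⁻¹ * exp 1 < 4 := by
      rw [← Real.exp_add]
      have : (4⁻¹ : ℝ) + 1 = 5/4 := by norm_num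
      rw [this]; exact exp54
    calc -(x * exp (-x)) = (-x) * exp (-x) := by ring
      _ < 4⁻¹ * exp 4⁻¹ := by
          apply mul_lt_mul'' hnx (Real.exp_lt_exp.2 hnx) hnx0.le (exp_pos _).le
      _ < exp (-1) := by
          rw [Real.exp_neg, show (exp 1)⁻¹ = 1 / exp 1 from (one_div _).symm,
            lt_div_iff₀ (exp_pos 1)]
          nlinarith [exp_pos (4⁻¹:ℝ)]

lemma qlt {x : ℝ} (hx : |x| < 8⁻¹) : exp 1 * |x| * exp |x| < 1 := by
  have h0 : 0 ≤ |x| := abs_nonneg x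
  have hle : exp |x| ≤ exp 4⁻¹ := Real.exp_le_exp.2 (by linarith)
  have key : exp 1 * exp 4⁻¹ < 4 := by
    rw [← Real.exp_add]
    have : (1:ℝ) + 4⁻¹ = 5/4 := by norm_num
    rw [this]; exact exp54
  calc exp 1 * |x| * exp |x| ≤ exp 1 * |x| * exp 4⁻¹ := by
        apply mul_le_mul_of_nonneg_left hle (by positivity)
    _ = (exp 1 * exp 4⁻¹) * |x| := by ring
    _ ≤ 4 * |x| := mul_le_mul_of_nonneg_right key.le h0
    _ < 4 * 8⁻¹ := mul_lt_mul_of_pos_left hx (by norm_num)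
    _ < 1 := by norm_num

noncomputable def pp : FormalMultilinearSeries ℝ ℝ ℝ := FormalMultilinearSeries.ofScalars ℝ cc

lemma pp_radius : (Real.toNNReal (exp (-1)) : ENNReal) ≤ pp.radius := by
  apply pp.le_radius_of_bound 1
  intro n
  rw [show pp n = FormalMultilinearSeries.ofScalars ℝ cc n from rfl,
    FormalMultilinearSeries.ofScalars_norm]
  have hc : ‖cc n‖ = cc n := Real.norm_of_nonneg (cc_nonneg n)
  have hcoe : ((Real.toNNReal (exp (-1)) : NNReal) : ℝ) = exp (-1) :=
    Real.coe_toNNReal _ (exp_pos _).le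
  rw [hc, hcoe]
  calc cc n * exp (-1) ^ n ≤ exp 1 ^ n * exp (-1) ^ n := by
        apply mul_le_mul_of_nonneg_right (cc_le n) (by positivity)
    _ = 1 := by
        rw [← mul_pow, ← Real.exp_add]
        norm_num

lemma mem_ball_of_abs {y : ℝ} (hy : |y| < exp (-1)) : y ∈ Metric.eball (0:ℝ) pp.radius := by
  rw [mem_emetric_ball_zero_iff]
  refine lt_of_lt_of_le ?_ pp_radius
  rw [enorm_eq_nnnorm, ENNReal.coe_lt_coe, ← NNReal.coe_lt_coe, coe_nnnorm, Real.norm_eq_abs,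
    Real.coe_toNNReal _ (exp_pos _).le]
  exact hy

lemma pp_sum_eq (y : ℝ) : pp.sum y = ∑' n, cc n * y ^ n :=
  tsum_congr fun n => by
    rw [show pp n = FormalMultilinearSeries.ofScalars ℝ cc n from rfl,
      FormalMultilinearSeries.ofScalars_apply_eq, smul_eq_mul]

set_option maxHeartbeats 2000000 in
lemma small_eq {x : ℝ} (hx : |x| < 8⁻¹) : pp.sum (x * exp (-x)) = x / (1 - x) := by
  have hx1 : |x| < 1 := lt_trans hx (by norm_num)
  set q : ℝ := exp 1 * |x| * exp |x| with hqdef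
  have hq0 : 0 ≤ q := by positivity
  have hq1 : q < 1 := qlt hx
  set φ : ℕ × ℕ → ℝ :=
    fun r => cc (r.1+1) * x^(r.1+1) * ((-((r.1:ℝ)+1) * x)^r.2 / r.2.factorial) with hφdef
  -- row sums
  have hrow : ∀ d : ℕ, HasSum (fun m => φ (d, m)) (cc (d+1) * (x * exp (-x))^(d+1)) := by
    intro d
    have he := NormedSpace.expSeries_div_hasSum_exp (-((d:ℝ)+1) * x)
    have h2 := he.mul_left (cc (d+1) * x^(d+1))
    have heq : cc (d+1) * x^(d+1) * NormedSpace.exp (-((d:ℝ)+1) * x)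
        = cc (d+1) * (x * exp (-x))^(d+1) := by
      rw [← Real.exp_eq_exp_ℝ]
      rw [mul_pow, show (exp (-x))^(d+1) = exp (((d:ℕ)+1 : ℕ) * (-x)) from
        (Real.exp_nat_mul (-x) (d+1)).symm]
      push_cast
      ring_nf
    rw [← heq]
    exact h2
  -- absolute row sums
  have hrowabs : ∀ d : ℕ, HasSum (fun m => |φ (d, m)|)
      (cc (d+1) * |x|^(d+1) * exp (((d:ℝ)+1) * |x|)) := by
    intro d
    have he := NormedSpace.expSeries_div_hasSum_exp (((d:ℝ)+1) * |x|)
    have h2 := he.mul_left (cc (d+1) * |x|^(d+1))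
    rw [← Real.exp_eq_exp_ℝ] at h2
    have hpt : ∀ m : ℕ, |φ (d, m)|
        = cc (d+1) * |x|^(d+1) * ((((d:ℝ)+1) * |x|)^m / m.factorial) := by
      intro m
      have habs1 : |(-((d:ℝ)+1) * x)| = ((d:ℝ)+1) * |x| := by
        rw [abs_mul, abs_neg, abs_of_nonneg (by positivity : (0:ℝ) ≤ (d:ℝ)+1)]
      rw [hφdef]
      simp only
      rw [abs_mul, abs_mul, abs_div, abs_pow, abs_pow, habs1,
        abs_of_nonneg (cc_nonneg _), Nat.abs_cast]
    rw [show (fun m => |φ (d, m)|)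
        = fun m => cc (d+1) * |x|^(d+1) * ((((d:ℝ)+1) * |x|)^m / m.factorial) from funext hpt]
    exact h2
  -- bound on absolute row sums
  have hbound : ∀ d : ℕ, cc (d+1) * |x|^(d+1) * exp (((d:ℝ)+1) * |x|) ≤ q^(d+1) := by
    intro d
    have h1 : exp (((d:ℝ)+1) * |x|) = exp |x| ^ (d+1) := by
      rw [show ((d:ℝ)+1) = ((d+1 : ℕ) : ℝ) by push_cast; ring, Real.exp_nat_mul]
    rw [h1, hqdef, mul_pow, mul_pow]
    apply mul_le_mul_of_nonneg_right _ (by positivity)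
    apply mul_le_mul_of_nonneg_right (cc_le _) (by positivity)
  have hqsum : Summable (fun d : ℕ => q^(d+1)) := by
    simpa [pow_succ'] using (summable_geometric_of_lt_one hq0 hq1).mul_left q
  -- summability of |φ|
  have habs : Summable (fun r : ℕ × ℕ => |φ r|) := by
    apply (summable_prod_of_nonneg (fun r => abs_nonneg (φ r))).2
    constructor
    · exact fun d => (hrowabs d).summable
    · apply Summable.of_nonneg_of_le (fun d => tsum_nonneg (fun m => abs_nonneg _)) _ hqsum
      intro d
      rw [(hrowabs d).tsum_eq]
      exact hbound d
  have hsum : Summable φ := habs.of_abs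
  -- marginal summability
  have hmarg : Summable (fun d : ℕ => cc (d+1) * (x * exp (-x))^(d+1)) := by
    apply Summable.of_abs
    apply Summable.of_nonneg_of_le (fun d => abs_nonneg _) _ hqsum
    intro d
    rw [abs_mul, abs_of_nonneg (cc_nonneg _), abs_pow, abs_mul, Real.abs_exp]
    calc cc (d+1) * (|x| * exp (-x))^(d+1)
        ≤ exp 1 ^ (d+1) * (|x| * exp |x|)^(d+1) := by
          apply mul_le_mul (cc_le _) _ (by positivity) (by positivity)
          apply pow_le_pow_left₀ (by positivity)
          apply mul_le_mul_of_nonneg_left (Real.exp_le_exp.2 (neg_le_abs x)) (abs_nonneg x)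
      _ = q^(d+1) := by rw [hqdef, ← mul_pow]; ring_nf
  -- way 1
  have way1 : ∑' r, φ r = ∑' d, cc (d+1) * (x * exp (-x))^(d+1) := by
    rw [Summable.tsum_prod hsum]
    exact tsum_congr fun d => (hrow d).tsum_eq
  -- way 2
  have way2 : ∑' r, φ r = x / (1 - x) := by
    have hsig : Summable (fun σ : Σ n : ℕ, (Finset.HasAntidiagonal.antidiagonal n : Finset (ℕ × ℕ)) =>
        φ (Finset.HasAntidiagonal.sigmaAntidiagonalEquivProd σ)) :=
      Finset.HasAntidiagonal.sigmaAntidiagonalEquivProd.summable_iff.2 hsum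
    have step1 : ∑' r, φ r = ∑' σ : Σ n : ℕ, (Finset.HasAntidiagonal.antidiagonal n : Finset (ℕ × ℕ)),
        φ (Finset.HasAntidiagonal.sigmaAntidiagonalEquivProd σ) :=
      (Finset.HasAntidiagonal.sigmaAntidiagonalEquivProd.tsum_eq φ).symm
    have step2 : (∑' σ : Σ n : ℕ, (Finset.HasAntidiagonal.antidiagonal n : Finset (ℕ × ℕ)),
          φ (Finset.HasAntidiagonal.sigmaAntidiagonalEquivProd σ))
        = ∑' (n : ℕ), ∑' p : (Finset.HasAntidiagonal.antidiagonal n : Finset (ℕ × ℕ)),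
            φ (Finset.HasAntidiagonal.sigmaAntidiagonalEquivProd ⟨n, p⟩) :=
      Summable.tsum_sigma hsig
    rw [step1, step2]
    have hinner : ∀ n : ℕ,
        (∑' p : (Finset.HasAntidiagonal.antidiagonal n : Finset (ℕ × ℕ)),
          φ (Finset.HasAntidiagonal.sigmaAntidiagonalEquivProd ⟨n, p⟩)) = x^(n+1) := by
      intro n
      have : ∀ p : (Finset.HasAntidiagonal.antidiagonal n : Finset (ℕ × ℕ)),
          φ (Finset.HasAntidiagonal.sigmaAntidiagonalEquivProd ⟨n, p⟩) = φ (p : ℕ × ℕ) := fun p => rfl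
      rw [tsum_congr this, Finset.tsum_subtype]
      have hterm : ∀ p ∈ Finset.HasAntidiagonal.antidiagonal n,
          φ p = ((((p.1 + 1 : ℕ) : ℝ) ^ (p.1 + 1) / (p.1 + 1).factorial) *
            ((-((p.1 : ℝ) + 1)) ^ p.2 / p.2.factorial)) * x^(n+1) := by
        intro p hp
        have hpn : p.1 + p.2 = n := Finset.HasAntidiagonal.mem_antidiagonal.1 hp
        rw [hφdef]
        simp only
        rw [cc_succ, mul_pow, show x^(p.1+1) = x^(p.1+1) from rfl]
        have hxp : x^(p.1+1) * x^p.2 = x^(n+1) := by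
          rw [← pow_add]
          congr 1
          omega
        field_simp
        rw [← hxp]
        ring
      rw [Finset.sum_congr rfl hterm, ← Finset.sum_mul, coeff_one, one_mul]
    rw [tsum_congr hinner]
    have hgeo := (hasSum_geometric_of_abs_lt_one hx1).mul_left x
    calc ∑' n : ℕ, x^(n+1) = ∑' n : ℕ, x * x^n := tsum_congr fun n => pow_succ' x n
      _ = x * (1-x)⁻¹ := hgeo.tsum_eq
      _ = x / (1 - x) := (div_eq_mul_inv x _).symm
  -- conclude
  rw [pp_sum_eq]
  have hfull : Summable (fun n : ℕ => cc n * (x * exp (-x))^n) :=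
    (summable_nat_add_iff 1).1 hmarg
  rw [Summable.tsum_eq_zero_add hfull]
  have hcc0 : cc 0 * (x * exp (-x))^0 = 0 := by simp [cc]
  rw [hcc0, zero_add, ← way1, way2]

lemma pp_analyticOnNhd : AnalyticOnNhd ℝ pp.sum (Metric.eball (0:ℝ) pp.radius) := by
  have h0 : (0:ENNReal) < pp.radius :=
    lt_of_lt_of_le (ENNReal.coe_pos.2 (Real.toNNReal_pos.2 (exp_pos _))) pp_radius
  exact (pp.hasFPowerSeriesOnBall h0).analyticOnNhd

lemma eq_on_U : ∀ x ∈ Set.Ioo (-4⁻¹ : ℝ) 1, pp.sum (x * exp (-x)) = x / (1 - x) := by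
  have hpre : IsPreconnected (Set.Ioo (-4⁻¹:ℝ) 1) := isPreconnected_Ioo
  have hAn1 : AnalyticOnNhd ℝ (fun t : ℝ => pp.sum (t * exp (-t))) (Set.Ioo (-4⁻¹:ℝ) 1) := by
    intro t ht
    have hw : AnalyticAt ℝ (fun t : ℝ => t * exp (-t)) t :=
      (analyticAt_id).mul (analyticAt_rexp.comp (analyticAt_id.neg))
    have hcomp := AnalyticAt.comp (f := fun t : ℝ => t * exp (-t)) (x := t)
      (pp_analyticOnNhd _ (mem_ball_of_abs (wlt ht.1 ht.2))) hw
    exact hcomp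
  have hAn2 : AnalyticOnNhd ℝ (fun t : ℝ => t / (1 - t)) (Set.Ioo (-4⁻¹:ℝ) 1) := by
    intro t ht
    exact (analyticAt_id).div ((analyticAt_const).sub analyticAt_id)
      (sub_ne_zero.2 (ne_of_gt ht.2))
  have hev : (fun t : ℝ => pp.sum (t * exp (-t))) =ᶠ[nhds (0:ℝ)] fun t => t / (1 - t) := by
    have hmem : Set.Ioo (-8⁻¹:ℝ) 8⁻¹ ∈ nhds (0:ℝ) := Ioo_mem_nhds (by norm_num) (by norm_num)
    filter_upwards [hmem] with t ht
    exact small_eq (abs_lt.2 ⟨ht.1, ht.2⟩)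
  intro x hx
  exact hAn1.eqOn_of_preconnected_of_eventuallyEq hAn2 hpre
    (Set.mem_Ioo.2 ⟨by norm_num, by norm_num⟩) hev hx

/-- for `0 ≤ x < 1`, `∑_{D=1}^∞ (D^D/D!)·(x·e^{−x})^D = x/(1−x)`. -/
theorem stmt8 (x : ℝ) (hx0 : 0 ≤ x) (hx1 : x < 1) :
    HasSum
      (fun n : ℕ =>
        ((n + 1 : ℕ) ^ (n + 1) / (n + 1).factorial : ℝ) * (x * Real.exp (-x)) ^ (n + 1))
      (x / (1 - x)) := by
  have hxU : x ∈ Set.Ioo (-4⁻¹:ℝ) 1 := ⟨by linarith, hx1⟩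
  set w : ℝ := x * exp (-x) with hwdef
  have hw : |w| < exp (-1) := wlt hxU.1 hx1
  have hwe : exp 1 * |w| < 1 := by
    have h := mul_lt_mul_of_pos_left hw (exp_pos 1)
    rwa [← Real.exp_add, show (1:ℝ) + -1 = 0 by ring, Real.exp_zero] at h
  have hgeo : Summable (fun n : ℕ => (exp 1 * |w|)^(n+1)) := by
    simpa [pow_succ'] using
      (summable_geometric_of_lt_one (by positivity) hwe).mul_left (exp 1 * |w|)
  have hsummable : Summable (fun n : ℕ => cc (n+1) * w^(n+1)) := by
    apply Summable.of_abs
    apply Summable.of_nonneg_of_le (fun n => abs_nonneg _) _ hgeo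
    intro n
    rw [abs_mul, abs_of_nonneg (cc_nonneg _), abs_pow]
    calc cc (n+1) * |w|^(n+1) ≤ exp 1^(n+1) * |w|^(n+1) :=
          mul_le_mul_of_nonneg_right (cc_le _) (by positivity)
      _ = (exp 1 * |w|)^(n+1) := (mul_pow _ _ _).symm
  have hts : ∑' n : ℕ, cc (n+1) * w^(n+1) = x / (1-x) := by
    have h1 : Summable (fun n : ℕ => cc n * w^n) := (summable_nat_add_iff 1).1 hsummable
    have h2 := Summable.tsum_eq_zero_add h1
    have hcc0 : cc 0 * w^0 = 0 := by simp [cc]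
    rw [hcc0, zero_add] at h2
    rw [← h2, ← pp_sum_eq w, hwdef]
    exact eq_on_U x hxU
  have hfin := hsummable.hasSum
  rw [hts] at hfin
  have hfun : (fun n : ℕ =>
      ((n + 1 : ℕ) ^ (n + 1) / (n + 1).factorial : ℝ) * (x * Real.exp (-x)) ^ (n + 1))
      = fun n : ℕ => cc (n+1) * w^(n+1) := by
    funext n
    rw [cc_succ, hwdef]
  rw [hfun]
  exact hfin
end

section
/- For every real number x with 0 ≤ x < 1, the series ∑_{D=1}^{∞} (D^{D+1}/D!)·(x·e^{−x})^D converges and its sum equals x/(1−x)^3. -/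
set_option maxHeartbeats 1000000

open Finset Filter Set Topology

namespace Stmt9


noncomputable def c : ℕ → ℝ := fun D => (D : ℝ) ^ (D + 1) / (D.factorial : ℝ)

lemma c_nonneg (D : ℕ) : 0 ≤ c D := by
  unfold c; positivity

lemma pow_le_exp_mul_factorial (D : ℕ) :
    (D : ℝ) ^ D ≤ Real.exp 1 ^ D * (D.factorial : ℝ) := by
  induction D with
  | zero => simp
  | succ D ih =>
    have h1 : ((D : ℝ) + 1) ^ D ≤ Real.exp 1 * (D : ℝ) ^ D := by
      rcases Nat.eq_zero_or_pos D with h | h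
      · subst h; simpa using Real.one_le_exp (by norm_num)
      · have hD : (0 : ℝ) < D := by exact_mod_cast h
        have hrw : ((D : ℝ) + 1) = D * (1 + 1 / D) := by field_simp
        rw [hrw, mul_pow]
        have h2 : (1 + 1 / (D : ℝ)) ≤ Real.exp (1 / D) := by
          have := Real.add_one_le_exp (1 / (D : ℝ)); linarith
        have h3 : (1 + 1 / (D : ℝ)) ^ D ≤ Real.exp (1 / D) ^ D :=
          pow_le_pow_left₀ (by positivity) h2 D
        have h4 : Real.exp (1 / (D : ℝ)) ^ D = Real.exp 1 := by
          rw [← Real.exp_nat_mul]; congr 1; field_simp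
        rw [h4] at h3
        nlinarith [pow_nonneg (le_of_lt hD) D]
    have hfs : ((D + 1).factorial : ℝ) = (D + 1) * D.factorial := by
      rw [Nat.factorial_succ]; push_cast; ring
    have hDpos : (0:ℝ) ≤ (D:ℝ) + 1 := by positivity
    calc ((D + 1 : ℕ) : ℝ) ^ (D + 1) = ((D : ℝ) + 1) ^ D * ((D : ℝ) + 1) := by
          push_cast; rw [pow_succ]
      _ ≤ (Real.exp 1 * (D : ℝ) ^ D) * ((D : ℝ) + 1) := by gcongr
      _ ≤ (Real.exp 1 * (Real.exp 1 ^ D * D.factorial)) * ((D : ℝ) + 1) := by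
          have := Real.exp_pos 1; gcongr
      _ = Real.exp 1 ^ (D + 1) * ((D + 1).factorial : ℝ) := by rw [hfs, pow_succ]; ring

lemma c_le (D : ℕ) : c D ≤ (D : ℝ) * Real.exp 1 ^ D := by
  have hD! : (0 : ℝ) < (D.factorial : ℝ) := by exact_mod_cast D.factorial_pos
  rw [c, div_le_iff₀ hD!]
  calc (D : ℝ) ^ (D + 1) = (D : ℝ) ^ D * D := by rw [pow_succ]
    _ ≤ (Real.exp 1 ^ D * D.factorial) * D := by
        have := pow_le_exp_mul_factorial D
        have hD0 : (0:ℝ) ≤ (D:ℝ) := by positivity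
        nlinarith
    _ = (D : ℝ) * Real.exp 1 ^ D * D.factorial := by ring



def B (m j : ℕ) : ℤ := ∑ D ∈ range (m + 1), (-1) ^ (m - D) * (m.choose D) * (D : ℤ) ^ j

lemma sign_split {D n : ℕ} (h : D ≤ n) : ((-1 : ℤ)) ^ (n - D) = (-1) ^ n * (-1) ^ D := by
  have hh : n - D + D = n := Nat.sub_add_cancel h
  have h2 : ((-1 : ℤ)) ^ D * (-1) ^ D = 1 := by
    rw [← pow_add]; exact Even.neg_one_pow ⟨D, rfl⟩
  calc ((-1 : ℤ)) ^ (n - D) = (-1) ^ (n - D) * ((-1) ^ D * (-1) ^ D) := by rw [h2, mul_one]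
    _ = ((-1) ^ (n - D) * (-1) ^ D) * (-1) ^ D := by ring
    _ = (-1) ^ n * (-1) ^ D := by rw [← pow_add, hh]

lemma B_rec (m j : ℕ) :
    B (m + 1) (j + 1) = (m + 1) * ∑ i ∈ range (j + 1), (j.choose i : ℤ) * B m i := by
  rw [B, Finset.sum_range_succ']
  have h0 : (-1 : ℤ) ^ (m + 1 - 0) * ((m + 1).choose 0) * ((0 : ℕ) : ℤ) ^ (j + 1) = 0 := by
    simp
  rw [h0, add_zero]
  have key : ∀ E ∈ range (m + 1),
      (-1 : ℤ) ^ (m + 1 - (E + 1)) * ((m + 1).choose (E + 1)) * ((E + 1 : ℕ) : ℤ) ^ (j + 1)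
      = ∑ i ∈ range (j + 1),
          ((m : ℤ) + 1) * (j.choose i) * ((-1) ^ (m - E) * (m.choose E) * (E : ℤ) ^ i) := by
    intro E hE
    have hs : m + 1 - (E + 1) = m - E := by omega
    have hc : (((m + 1).choose (E + 1) : ℤ)) * ((E : ℤ) + 1) = ((m : ℤ) + 1) * (m.choose E) := by
      have := Nat.add_one_mul_choose_eq m E
      have h' : (m + 1) * m.choose E = (m + 1).choose (E + 1) * (E + 1) := by
        simpa [Nat.succ_eq_add_one] using this
      exact_mod_cast h'.symm
    have hp : ((E : ℤ) + 1) ^ j = ∑ i ∈ range (j + 1), (E : ℤ) ^ i * (j.choose i) := by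
      have := add_pow (E : ℤ) 1 j
      simpa using this
    rw [hs]
    push_cast
    calc (-1 : ℤ) ^ (m - E) * ((m + 1).choose (E + 1)) * ((E : ℤ) + 1) ^ (j + 1)
        = (-1 : ℤ) ^ (m - E) * (((m + 1).choose (E + 1)) * ((E : ℤ) + 1)) * ((E : ℤ) + 1) ^ j := by
          rw [pow_succ]; ring
      _ = (-1 : ℤ) ^ (m - E) * (((m : ℤ) + 1) * (m.choose E)) *
            (∑ i ∈ range (j + 1), (E : ℤ) ^ i * (j.choose i)) := by rw [hc, hp]
      _ = ∑ i ∈ range (j + 1),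
            ((m : ℤ) + 1) * (j.choose i) * ((-1) ^ (m - E) * (m.choose E) * (E : ℤ) ^ i) := by
          rw [Finset.mul_sum]; apply Finset.sum_congr rfl; intro i _; ring
  rw [Finset.sum_congr rfl key, Finset.sum_comm]
  rw [Finset.mul_sum]
  apply Finset.sum_congr rfl
  intro i _
  rw [B, Finset.mul_sum, Finset.mul_sum]
  apply Finset.sum_congr rfl
  intro E _
  push_cast
  ring

lemma B_eq_zero : ∀ m j, j < m → B m j = 0 := by
  intro m
  induction m with
  | zero => intro j h; omega
  | succ m ih =>
    intro j hj
    match j with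
    | 0 =>
      rw [B]
      have hterm : ∀ D ∈ range (m + 2),
          (-1 : ℤ) ^ (m + 1 - D) * ((m + 1).choose D) * (D : ℤ) ^ 0
          = (-1) ^ (m + 1) * ((-1) ^ D * ((m + 1).choose D)) := by
        intro D hD
        rw [Finset.mem_range] at hD
        rw [pow_zero, sign_split (by omega : D ≤ m + 1)]
        ring
      rw [Finset.sum_congr rfl hterm, ← Finset.mul_sum]
      have := Int.alternating_sum_range_choose_of_ne (n := m + 1) (by omega)
      rw [this, mul_zero]
    | j + 1 =>
      rw [B_rec]
      have hz : ∀ i ∈ range (j + 1), (j.choose i : ℤ) * B m i = 0 := by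
        intro i hi
        rw [Finset.mem_range] at hi
        rw [ih i (by omega), mul_zero]
      rw [Finset.sum_congr rfl hz, Finset.sum_const_zero, mul_zero]

lemma B_diag : ∀ m, B m m = (m.factorial : ℤ) := by
  intro m
  induction m with
  | zero => simp [B]
  | succ m ih =>
    rw [B_rec, Finset.sum_range_succ]
    have hz : ∀ i ∈ range m, ((m.choose i : ℤ)) * B m i = 0 := by
      intro i hi
      rw [Finset.mem_range] at hi
      rw [B_eq_zero m i hi, mul_zero]
    rw [Finset.sum_congr rfl hz, Finset.sum_const_zero, zero_add, Nat.choose_self, ih,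
      Nat.factorial_succ]
    push_cast
    ring

lemma B_two : ∀ m, 2 * B m (m + 1) = (m.factorial : ℤ) * m * (m + 1) := by
  intro m
  induction m with
  | zero => simp [B]
  | succ m ih =>
    rw [B_rec, Finset.sum_range_succ, Finset.sum_range_succ]
    have hz : ∀ i ∈ range m, (((m + 1).choose i : ℤ)) * B m i = 0 := by
      intro i hi
      rw [Finset.mem_range] at hi
      rw [B_eq_zero m i hi, mul_zero]
    rw [Finset.sum_congr rfl hz, Finset.sum_const_zero, zero_add, Nat.choose_self,
      Nat.choose_succ_self_right, B_diag]
    push_cast [Nat.factorial_succ]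
    linear_combination ((m : ℤ) + 1) * ih



lemma row_sum (m : ℕ) :
    ∑ D ∈ range (m + 1), c D * (-(D : ℝ)) ^ (m - D) / ((m - D).factorial : ℝ)
      = (m : ℝ) * (m + 1) / 2 := by
  have hm : ((m.factorial : ℝ)) ≠ 0 := by positivity
  have hterm : ∀ D ∈ range (m + 1),
      c D * (-(D : ℝ)) ^ (m - D) / ((m - D).factorial : ℝ)
      = ((-1 : ℝ) ^ (m - D) * (m.choose D) * (D : ℝ) ^ (m + 1)) / (m.factorial : ℝ) := by
    intro D hD
    rw [Finset.mem_range] at hD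
    have hDm : D ≤ m := by omega
    have hfac : ((m.choose D : ℝ)) * ((D.factorial : ℝ) * (((m - D).factorial : ℝ))) =
        (m.factorial : ℝ) := by
      rw [← mul_assoc]
      exact_mod_cast Nat.choose_mul_factorial_mul_factorial hDm
    have hDpow : (D : ℝ) ^ (D + 1) * (D : ℝ) ^ (m - D) = (D : ℝ) ^ (m + 1) := by
      rw [← pow_add]; congr 1; omega
    have hneg : (-(D : ℝ)) ^ (m - D) = (-1) ^ (m - D) * (D : ℝ) ^ (m - D) := by
      rw [neg_pow]
    have hd0 : ((D.factorial : ℝ)) ≠ 0 := by positivity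
    have hmd0 : (((m - D).factorial : ℝ)) ≠ 0 := by positivity
    rw [c, hneg]
    field_simp
    linear_combination ((m.factorial : ℝ)) * hDpow
      - ((D:ℝ)^(m+1)) * hfac
  rw [Finset.sum_congr rfl hterm, ← Finset.sum_div]
  have hB : ∑ D ∈ range (m + 1), ((-1 : ℝ) ^ (m - D) * (m.choose D) * (D : ℝ) ^ (m + 1))
      = ((B m (m + 1) : ℤ) : ℝ) := by
    rw [B]; push_cast; rfl
  rw [hB]
  have h2 : ((2 * B m (m + 1) : ℤ) : ℝ) = ((m.factorial : ℤ) : ℝ) * m * (m + 1) := by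
    exact_mod_cast congrArg (Int.cast : ℤ → ℝ) (B_two m)
  push_cast at h2
  rw [div_eq_div_iff hm (by norm_num : (2:ℝ) ≠ 0)]
  linarith



lemma exp_le_inv_one_sub {t : ℝ} (ht0 : 0 ≤ t) (ht1 : t < 1) :
    Real.exp t ≤ (1 - t)⁻¹ := by
  have h1 : 1 - t ≤ Real.exp (-t) := by
    have := Real.add_one_le_exp (-t); linarith
  have h2 : (0:ℝ) < 1 - t := by linarith
  have h4 : (0:ℝ) < Real.exp t := Real.exp_pos _
  rw [Real.exp_neg] at h1
  rw [← one_div, le_div_iff₀ h2]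
  calc Real.exp t * (1 - t) ≤ Real.exp t * (Real.exp t)⁻¹ :=
        mul_le_mul_of_nonneg_left h1 (le_of_lt h4)
    _ = 1 := mul_inv_cancel₀ (ne_of_gt h4)

lemma choose_two (n : ℕ) : ((n + 2).choose 2 : ℝ) = ((n:ℝ) + 1) * ((n:ℝ) + 2) / 2 := by
  induction n with
  | zero => norm_num
  | succ n ih =>
    have h : (n + 1 + 2).choose 2 = (n + 2) + (n + 2).choose 2 := by
      rw [show n + 1 + 2 = (n + 2) + 1 from rfl, Nat.choose_succ_succ, Nat.choose_one_right]
    rw [h]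
    push_cast
    rw [ih]
    push_cast
    ring

lemma key {x : ℝ} (hx : |x| < 1 / 10) :
    HasSum (fun D => c D * (x * Real.exp (-x)) ^ D) (x / (1 - x) ^ 3) := by
  set y := |x| with hy
  have hy0 : 0 ≤ y := abs_nonneg x
  have hexpy : Real.exp y ≤ 10 / 9 := by
    calc Real.exp y ≤ (1 - y)⁻¹ := exp_le_inv_one_sub hy0 (by linarith)
      _ ≤ (9/10 : ℝ)⁻¹ := by apply inv_anti₀ (by norm_num) (by linarith)
      _ = 10 / 9 := by norm_num
  set q : ℝ := Real.exp 1 * y * (10 / 9) with hq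
  have hq0 : 0 ≤ q := by positivity
  have hq1 : q < 1 := by
    have he : Real.exp 1 < 2.7182818286 := Real.exp_one_lt_d9
    have h1 : Real.exp 1 * y ≤ Real.exp 1 * (1/10) :=
      mul_le_mul_of_nonneg_left (le_of_lt hx) (le_of_lt (Real.exp_pos 1))
    have : q < 2.7182818286 * (1/10) * (10/9) := by
      rw [hq]; nlinarith [Real.exp_pos 1]
    linarith
  set g : ℕ × ℕ → ℝ := fun p => c p.1 * (-(p.1 : ℝ)) ^ p.2 / (p.2.factorial : ℝ) * x ^ (p.1 + p.2)
    with hgdef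
  have habs_eq : ∀ p : ℕ × ℕ,
      |g p| = c p.1 * (p.1 : ℝ) ^ p.2 / (p.2.factorial : ℝ) * y ^ (p.1 + p.2) := by
    rintro ⟨D, k⟩
    simp only [hgdef, abs_mul, abs_div, abs_pow, abs_neg]
    rw [abs_of_nonneg (c_nonneg D), Nat.abs_cast, Nat.abs_cast, ← hy]
  have hinner : ∀ D : ℕ, HasSum (fun k => |g (D, k)|) (c D * y ^ D * Real.exp ((D : ℝ) * y)) := by
    intro D
    have h1 : HasSum (fun k => ((D : ℝ) * y) ^ k / (k.factorial : ℝ))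
        (Real.exp ((D : ℝ) * y)) := by
      rw [Real.exp_eq_exp_ℝ]
      exact NormedSpace.expSeries_div_hasSum_exp ((D : ℝ) * y)
    have h2 := h1.mul_left (c D * y ^ D)
    have hfun : (fun k => |g (D, k)|)
        = fun k => (c D * y ^ D) * (((D : ℝ) * y) ^ k / (k.factorial : ℝ)) := by
      funext k
      rw [habs_eq (D, k), pow_add, mul_pow]
      ring
    rw [hfun]
    simpa [mul_assoc] using h2
  have habs : Summable (fun p : ℕ × ℕ => |g p|) := by
    apply (summable_prod_of_nonneg (fun p => abs_nonneg (g p))).2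
    refine ⟨fun D => (hinner D).summable, ?_⟩
    have hcmp : Summable (fun D : ℕ => (D : ℝ) * q ^ D) := by
      have := summable_pow_mul_geometric_of_norm_lt_one (R := ℝ) 1
        (r := q) (by rwa [Real.norm_eq_abs, abs_of_nonneg hq0])
      simpa using this
    apply Summable.of_nonneg_of_le ?_ ?_ hcmp
    · intro D
      rw [(hinner D).tsum_eq]
      exact mul_nonneg (mul_nonneg (c_nonneg D) (pow_nonneg hy0 D))
        (le_of_lt (Real.exp_pos _))
    · intro D
      rw [(hinner D).tsum_eq]
      have e1 : Real.exp ((D : ℝ) * y) = (Real.exp y) ^ D := Real.exp_nat_mul y D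
      have e2 : (Real.exp y) ^ D ≤ (10/9 : ℝ) ^ D :=
        pow_le_pow_left₀ (le_of_lt (Real.exp_pos y)) hexpy D
      have e3 : c D * y ^ D ≤ ((D : ℝ) * Real.exp 1 ^ D) * y ^ D :=
        mul_le_mul_of_nonneg_right (c_le D) (pow_nonneg hy0 D)
      have e4 : q ^ D = Real.exp 1 ^ D * y ^ D * (10/9 : ℝ) ^ D := by
        rw [hq, mul_pow, mul_pow]
      calc c D * y ^ D * Real.exp ((D : ℝ) * y)
          ≤ ((D : ℝ) * Real.exp 1 ^ D) * y ^ D * (10/9 : ℝ) ^ D := by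
            rw [e1]
            have hcy : 0 ≤ c D * y ^ D := mul_nonneg (c_nonneg D) (pow_nonneg hy0 D)
            have h5 : c D * y ^ D * (Real.exp y) ^ D ≤ c D * y ^ D * (10/9:ℝ) ^ D :=
              mul_le_mul_of_nonneg_left e2 hcy
            have h6 : c D * y ^ D * (10/9:ℝ) ^ D
                ≤ ((D : ℝ) * Real.exp 1 ^ D) * y ^ D * (10/9:ℝ) ^ D :=
              mul_le_mul_of_nonneg_right e3 (pow_nonneg (by norm_num) D)
            linarith
        _ = (D : ℝ) * q ^ D := by rw [e4]; ring
  have hg_summable : Summable g := by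
    apply Summable.of_norm
    simpa [Real.norm_eq_abs] using habs
  have hG : HasSum g (∑' p, g p) := hg_summable.hasSum
  have hfib : ∀ D : ℕ, HasSum (fun k => g (D, k)) (c D * (x * Real.exp (-x)) ^ D) := by
    intro D
    have h1 : HasSum (fun k => (-(D : ℝ) * x) ^ k / (k.factorial : ℝ))
        (Real.exp (-(D : ℝ) * x)) := by
      rw [Real.exp_eq_exp_ℝ]
      exact NormedSpace.expSeries_div_hasSum_exp _
    have h2 := h1.mul_left (c D * x ^ D)
    have hfun : (fun k => g (D, k))
        = fun k => (c D * x ^ D) * ((-(D : ℝ) * x) ^ k / (k.factorial : ℝ)) := by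
      funext k
      show c D * (-(D : ℝ)) ^ k / (k.factorial : ℝ) * x ^ (D + k) = _
      rw [pow_add, mul_pow]
      ring
    have hval : c D * (x * Real.exp (-x)) ^ D = (c D * x ^ D) * Real.exp (-(D : ℝ) * x) := by
      rw [mul_pow, show -(D : ℝ) * x = (D : ℝ) * (-x) by ring, Real.exp_nat_mul]
      ring
    rw [hfun, hval]
    exact h2
  have hDsum : HasSum (fun D => c D * (x * Real.exp (-x)) ^ D) (∑' p, g p) :=
    hG.prod_fiberwise hfib
  have he : HasSum (g ∘ (Finset.HasAntidiagonal.sigmaAntidiagonalEquivProd (A := ℕ))) (∑' p, g p) :=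
    (Equiv.hasSum_iff _).2 hG
  have hrow : ∀ m : ℕ, HasSum (fun p : (antidiagonal m : Finset (ℕ × ℕ)) => g ↑p)
      (((m : ℝ) * ((m : ℝ) + 1) / 2) * x ^ m) := by
    intro m
    have hfin := (antidiagonal m).hasSum g
    have hsum_eq : ∑ p ∈ antidiagonal m, g p = ((m : ℝ) * ((m : ℝ) + 1) / 2) * x ^ m := by
      rw [Finset.Nat.sum_antidiagonal_eq_sum_range_succ_mk]
      have hterm : ∀ D ∈ range (m + 1), g (D, m - D)
          = (c D * (-(D : ℝ)) ^ (m - D) / (((m - D).factorial : ℕ) : ℝ)) * x ^ m := by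
        intro D hD; rw [Finset.mem_range] at hD
        show c D * (-(D : ℝ)) ^ (m - D) / ((m - D).factorial : ℝ) * x ^ (D + (m - D)) = _
        rw [show D + (m - D) = m by omega]
      rw [Finset.sum_congr rfl hterm, ← Finset.sum_mul, row_sum m]
    rw [← hsum_eq]
    exact hfin
  have hregroup : HasSum (fun m : ℕ => ((m : ℝ) * ((m : ℝ) + 1) / 2) * x ^ m) (∑' p, g p) :=
    he.sigma hrow
  have hx1 : ‖x‖ < 1 := by rw [Real.norm_eq_abs]; linarith
  have h0 : HasSum (fun n : ℕ => ((n + 2).choose 2 : ℝ) * x ^ n) (1 / (1 - x) ^ 3) :=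
    hasSum_choose_mul_geometric_of_norm_lt_one 2 hx1
  have h1 := h0.mul_right x
  have h2 : HasSum (fun n : ℕ => (((n + 1 : ℕ) : ℝ) * (((n + 1 : ℕ) : ℝ) + 1) / 2) * x ^ (n + 1))
      (x / (1 - x) ^ 3) := by
    have hfun : (fun n : ℕ => (((n + 1 : ℕ) : ℝ) * (((n + 1 : ℕ) : ℝ) + 1) / 2) * x ^ (n + 1))
        = fun n : ℕ => ((n + 2).choose 2 : ℝ) * x ^ n * x := by
      funext n
      rw [choose_two n, pow_succ]
      push_cast
      ring
    rw [hfun, show x / (1 - x) ^ 3 = 1 / (1 - x) ^ 3 * x by ring]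
    exact h1
  have htarget : HasSum (fun m : ℕ => ((m : ℝ) * ((m : ℝ) + 1) / 2) * x ^ m)
      (x / (1 - x) ^ 3) := by
    have h3 := (hasSum_nat_add_iff (f := fun m : ℕ => ((m : ℝ) * ((m : ℝ) + 1) / 2) * x ^ m) 1).1
      h2
    simpa using h3
  have hS : ∑' p, g p = x / (1 - x) ^ 3 := hregroup.unique htarget
  rwa [hS] at hDsum



noncomputable def p : FormalMultilinearSeries ℝ ℝ ℝ := FormalMultilinearSeries.ofScalars ℝ c

lemma psum_eq {w : ℝ} (hw : Summable (fun D => c D * w ^ D)) :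
    p.sum w = ∑' D, c D * w ^ D := by
  rw [FormalMultilinearSeries.sum]
  apply tsum_congr
  intro n
  rw [p, FormalMultilinearSeries.ofScalars_apply_eq, smul_eq_mul]

lemma summable_cw {w : ℝ} (hw : |w| * Real.exp 1 < 1) :
    Summable (fun D => c D * w ^ D) := by
  have h0 : 0 ≤ |w| * Real.exp 1 := by positivity
  apply Summable.of_norm
  have hcmp : Summable (fun D : ℕ => (D : ℝ) * (|w| * Real.exp 1) ^ D) := by
    have := summable_pow_mul_geometric_of_norm_lt_one (R := ℝ) 1
      (r := |w| * Real.exp 1) (by rwa [Real.norm_eq_abs, abs_of_nonneg h0])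
    simpa using this
  apply Summable.of_nonneg_of_le (fun D => norm_nonneg _) ?_ hcmp
  intro D
  rw [Real.norm_eq_abs, abs_mul, abs_of_nonneg (c_nonneg D), abs_pow]
  calc c D * |w| ^ D ≤ ((D : ℝ) * Real.exp 1 ^ D) * |w| ^ D :=
        mul_le_mul_of_nonneg_right (c_le D) (pow_nonneg (abs_nonneg w) D)
    _ = (D : ℝ) * (|w| * Real.exp 1) ^ D := by rw [mul_pow]; ring

lemma z_small {x : ℝ} (hx0 : -(1/10) < x) (hx1 : x < 1) :
    |x * Real.exp (-x)| * Real.exp 1 < 1 := by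
  have hepos := Real.exp_pos (-x)
  rcases le_or_gt x 0 with h | h
  · have habs : |x * Real.exp (-x)| = -x * Real.exp (-x) := by
      rw [abs_mul, abs_of_nonpos h, abs_of_pos hepos]
    rw [habs]
    have he : Real.exp 1 < 2.7182818286 := Real.exp_one_lt_d9
    have hx' : Real.exp (-x) ≤ Real.exp 1 := Real.exp_le_exp.2 (by linarith)
    have h1 : -x * Real.exp (-x) ≤ (1/10) * Real.exp 1 :=
      mul_le_mul (by linarith) hx' (le_of_lt hepos) (by norm_num)
    have h2 : -x * Real.exp (-x) * Real.exp 1 ≤ (1/10) * Real.exp 1 * Real.exp 1 :=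
      mul_le_mul_of_nonneg_right h1 (le_of_lt (Real.exp_pos 1))
    nlinarith [Real.exp_pos 1]
  · have habs : |x * Real.exp (-x)| = x * Real.exp (-x) := by
      rw [abs_of_pos (mul_pos h hepos)]
    rw [habs]
    have hlt : x < Real.exp (x - 1) := by
      have := Real.add_one_lt_exp (x := x - 1) (sub_ne_zero.2 (ne_of_lt hx1))
      linarith
    calc x * Real.exp (-x) * Real.exp 1
        < Real.exp (x - 1) * Real.exp (-x) * Real.exp 1 := by
          apply mul_lt_mul_of_pos_right (mul_lt_mul_of_pos_right hlt hepos) (Real.exp_pos 1)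
      _ = 1 := by
          rw [← Real.exp_add, ← Real.exp_add, show x - 1 + -x + 1 = 0 by ring, Real.exp_zero]

lemma rad : ENNReal.ofReal (Real.exp 1)⁻¹ ≤ p.radius := by
  apply ENNReal.le_of_forall_nnreal_lt
  intro r hr
  have hr' : (r : ℝ) < (Real.exp 1)⁻¹ := by
    rw [← ENNReal.ofReal_coe_nnreal] at hr
    exact (ENNReal.ofReal_lt_ofReal_iff_of_nonneg r.2).1 hr
  apply p.le_radius_of_summable_norm
  have hq : 0 ≤ (r : ℝ) * Real.exp 1 := by positivity
  have hq1 : (r : ℝ) * Real.exp 1 < 1 := by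
    have he := Real.exp_pos 1
    have := mul_lt_mul_of_pos_right hr' he
    rwa [inv_mul_cancel₀ (ne_of_gt he)] at this
  have hcmp : Summable (fun D : ℕ => (D : ℝ) * ((r : ℝ) * Real.exp 1) ^ D) := by
    have := summable_pow_mul_geometric_of_norm_lt_one (R := ℝ) 1
      (r := (r : ℝ) * Real.exp 1) (by rwa [Real.norm_eq_abs, abs_of_nonneg hq])
    simpa using this
  apply Summable.of_nonneg_of_le ?_ ?_ hcmp
  · intro n
    positivity
  · intro n
    rw [p, FormalMultilinearSeries.ofScalars_norm, Real.norm_eq_abs,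
      abs_of_nonneg (c_nonneg n)]
    calc c n * (r : ℝ) ^ n ≤ ((n : ℝ) * Real.exp 1 ^ n) * (r : ℝ) ^ n :=
          mul_le_mul_of_nonneg_right (c_le n) (pow_nonneg r.2 n)
      _ = (n : ℝ) * ((r : ℝ) * Real.exp 1) ^ n := by rw [mul_pow]; ring

lemma hfA : AnalyticOnNhd ℝ (fun v : ℝ => p.sum (v * Real.exp (-v)))
    (Set.Ioo (-(1/10) : ℝ) 1) := by
  intro v hv
  have hrpos : 0 < p.radius :=
    lt_of_lt_of_le (ENNReal.ofReal_pos.2 (by positivity)) rad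
  have hball := (p.hasFPowerSeriesOnBall hrpos).analyticOnNhd
  have hz := z_small hv.1 hv.2
  have hmem : v * Real.exp (-v) ∈ Metric.eball (0 : ℝ) p.radius := by
    rw [Metric.mem_eball, edist_zero_right]
    apply lt_of_lt_of_le ?_ rad
    rw [← ofReal_norm,
      ENNReal.ofReal_lt_ofReal_iff (by positivity : (0:ℝ) < (Real.exp 1)⁻¹)]
    rw [Real.norm_eq_abs]
    have he := Real.exp_pos 1
    have h2 : |v * Real.exp (-v)| * Real.exp 1 < (Real.exp 1)⁻¹ * Real.exp 1 := by
      rw [inv_mul_cancel₀ (ne_of_gt he)]; exact hz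
    exact lt_of_mul_lt_mul_right h2 (le_of_lt he)
  have hA : AnalyticAt ℝ p.sum (v * Real.exp (-v)) := hball _ hmem
  have hg : AnalyticAt ℝ (fun v : ℝ => v * Real.exp (-v)) v := by
    apply AnalyticAt.mul analyticAt_id
    exact (analyticAt_rexp).comp (analyticAt_id.neg)
  exact AnalyticAt.comp (g := p.sum) (f := fun v : ℝ => v * Real.exp (-v)) hA hg


end Stmt9


open Stmt9 in
/-- for `0 ≤ x < 1`, `∑_{D=1}^∞ (D^{D+1}/D!)·(x·e^{−x})^D = x/(1−x)^3`. -/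
theorem stmt9 (x : ℝ) (hx0 : 0 ≤ x) (hx1 : x < 1) :
    HasSum
      (fun n : ℕ =>
        ((n + 1 : ℕ) ^ ((n + 1) + 1) / (n + 1).factorial : ℝ) * (x * Real.exp (-x)) ^ (n + 1))
      (x / (1 - x) ^ 3) := by
  have hU : IsPreconnected (Set.Ioo (-(1/10) : ℝ) 1) := isPreconnected_Ioo
  have hRHS : AnalyticOnNhd ℝ (fun v : ℝ => v / (1 - v) ^ 3) (Set.Ioo (-(1/10) : ℝ) 1) := by
    intro v hv
    have hne : ((1 : ℝ) - v) ^ 3 ≠ 0 := pow_ne_zero 3 (sub_ne_zero.2 (ne_of_gt (by linarith [hv.2])))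
    exact (analyticAt_id).div ((analyticAt_const.sub analyticAt_id).pow 3) hne
  have hfg : (fun v : ℝ => p.sum (v * Real.exp (-v))) =ᶠ[𝓝 (0 : ℝ)]
      fun v => v / (1 - v) ^ 3 := by
    have hIoo : Set.Ioo (-(1/10) : ℝ) (1/10) ∈ 𝓝 (0 : ℝ) := Ioo_mem_nhds (by norm_num) (by norm_num)
    filter_upwards [hIoo] with v hv
    have hk := key (x := v) (abs_lt.mpr ⟨hv.1, hv.2⟩)
    rw [psum_eq hk.summable, hk.tsum_eq]
  have hEq := hfA.eqOn_of_preconnected_of_eventuallyEq hRHS hU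
    (z₀ := 0) ⟨by norm_num, by norm_num⟩ hfg
  have hxU : x ∈ Set.Ioo (-(1/10) : ℝ) 1 := ⟨by linarith, hx1⟩
  have heq : p.sum (x * Real.exp (-x)) = x / (1 - x) ^ 3 := hEq hxU
  have hz := z_small (lt_of_lt_of_le (by norm_num) hx0) hx1
  have hsum : Summable (fun D => c D * (x * Real.exp (-x)) ^ D) := summable_cw hz
  have hshift := Summable.tsum_eq_zero_add hsum
  have hc0 : c 0 * (x * Real.exp (-x)) ^ 0 = 0 := by simp [c]
  rw [hc0, zero_add] at hshift
  have hsum' : Summable (fun n => c (n + 1) * (x * Real.exp (-x)) ^ (n + 1)) :=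
    (summable_nat_add_iff 1).2 hsum
  have hval : ∑' n, c (n + 1) * (x * Real.exp (-x)) ^ (n + 1) = x / (1 - x) ^ 3 := by
    rw [← hshift, ← psum_eq hsum, heq]
  have final := hsum'.hasSum
  rw [hval] at final
  have hfun : (fun n : ℕ =>
        ((n + 1 : ℕ) ^ ((n + 1) + 1) / (n + 1).factorial : ℝ) * (x * Real.exp (-x)) ^ (n + 1))
      = fun n => c (n + 1) * (x * Real.exp (-x)) ^ (n + 1) := by
    funext n
    have : c (n + 1) = ((n + 1 : ℕ) ^ ((n + 1) + 1) / (n + 1).factorial : ℝ) := by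
      rw [c]
    rw [this]
  rw [hfun]
  exact final
end

section
/- Fix a nonnegative integer k and let F_k : ℝ → ℝ be defined by F_k(y) = ∑_{D=1}^{∞} (D^{D+k−1}/D!)·(y·e^{−y})^D. Then for every x with 0 < x < 1, F_k is differentiable at x and (x/(1−x))·F_k'(x) = F_{k+1}(x). -/
set_option maxHeartbeats 1000000

open Real Filter

/-- `F k y = ∑_{D=1}^∞ (D^{D+k−1}/D!)·(y·e^{−y})^D`, indexed by `n : ℕ` with `D = n+1`
(so the exponent `D + k − 1` is `n + k`). -/
noncomputable def F (k : ℕ) (y : ℝ) : ℝ :=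
  ∑' n : ℕ, ((n + 1 : ℕ) ^ (n + k) / (n + 1).factorial : ℝ) * (y * Real.exp (-y)) ^ (n + 1)

/-- Monotonicity: for `0 ≤ y ≤ b ≤ 1`, `y e^{-y} ≤ b e^{-b}`. -/
lemma g_mono {y b : ℝ} (hy : 0 ≤ y) (hyb : y ≤ b) (hb : b ≤ 1) :
    y * Real.exp (-y) ≤ b * Real.exp (-b) := by
  have h1 : y - b + 1 ≤ Real.exp (y - b) := Real.add_one_le_exp _
  have h2 : y ≤ b * Real.exp (y - b) := by nlinarith [h1, Real.exp_pos (y - b)]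
  calc y * Real.exp (-y) ≤ b * Real.exp (y - b) * Real.exp (-y) := by
        have := (Real.exp_pos (-y)).le
        exact mul_le_mul_of_nonneg_right h2 this
    _ = b * Real.exp (-b) := by rw [mul_assoc, ← Real.exp_add]; ring_nf

lemma g_lt {b : ℝ} (hb0 : 0 ≤ b) (hb : b < 1) : b * Real.exp (-b) < Real.exp (-1) := by
  have h1 : b - 1 + 1 < Real.exp (b - 1) := Real.add_one_lt_exp (by linarith)
  calc b * Real.exp (-b) < Real.exp (b - 1) * Real.exp (-b) := by
        have := Real.exp_pos (-b)
        nlinarith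
    _ = Real.exp (-1) := by rw [← Real.exp_add]; ring_nf

/-- Summability of the coefficient series at radius `r < e⁻¹`. -/
lemma summable_aux (m : ℕ) {r : ℝ} (hr0 : 0 < r) (hr1 : r < Real.exp (-1)) :
    Summable (fun n : ℕ => ((n + 1 : ℝ) ^ (n + m) / (n + 1).factorial) * r ^ n) := by
  set q : ℝ := Real.exp 1 * r with hq
  have hq0 : 0 < q := by positivity
  have hq1 : q < 1 := by
    have : Real.exp 1 * Real.exp (-1) = 1 := by rw [← Real.exp_add]; norm_num
    calc q < Real.exp 1 * Real.exp (-1) := by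
          exact mul_lt_mul_of_pos_left hr1 (Real.exp_pos 1)
      _ = 1 := this
  -- summable majorant : e * (n+1)^m * q^n
  have hmaj : Summable (fun n : ℕ => (n + 1 : ℝ) ^ m * q ^ (n + 1)) := by
    have h0 := summable_pow_mul_geometric_of_norm_lt_one (R := ℝ) m
      (r := q) (by rwa [Real.norm_eq_abs, abs_of_pos hq0])
    have h := (summable_nat_add_iff (f := fun n : ℕ => (n : ℝ) ^ m * q ^ n) 1).2 h0
    exact h.congr (fun n => by push_cast; ring)
  have hmaj2 : Summable (fun n : ℕ => (Real.exp 1 / q) * ((n + 1 : ℝ) ^ m * q ^ (n + 1))) :=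
    hmaj.mul_left _
  refine Summable.of_nonneg_of_le (fun n => by positivity) (fun n => ?_) hmaj2
  have hfac : (0 : ℝ) < (n + 1).factorial := by positivity
  have key : ((n + 1 : ℝ)) ^ (n + 1) / (n + 1).factorial ≤ Real.exp (n + 1) := by
    have := Real.pow_div_factorial_le_exp (x := (n + 1 : ℝ)) (by positivity) (n + 1)
    simpa using this
  have key2 : ((n + 1 : ℝ)) ^ n / (n + 1).factorial ≤ Real.exp (n + 1) := by
    have hn1 : (1 : ℝ) ≤ (n + 1 : ℝ) := by exact_mod_cast Nat.one_le_iff_ne_zero.2 (Nat.succ_ne_zero n)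
    have : ((n + 1 : ℝ)) ^ n ≤ ((n + 1 : ℝ)) ^ (n + 1) := pow_le_pow_right₀ hn1 (by omega)
    calc ((n + 1 : ℝ)) ^ n / (n + 1).factorial ≤ ((n + 1 : ℝ)) ^ (n + 1) / (n + 1).factorial :=
          div_le_div_of_nonneg_right this hfac.le
      _ ≤ Real.exp (n + 1) := key
  have hexp : Real.exp ((n : ℝ) + 1) = Real.exp 1 ^ (n + 1) := by
    rw [Real.exp_one_pow]; push_cast; ring_nf
  calc ((n + 1 : ℝ)) ^ (n + m) / (n + 1).factorial * r ^ n
      = (n + 1 : ℝ) ^ m * (((n + 1 : ℝ)) ^ n / (n + 1).factorial) * r ^ n := by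
        rw [pow_add]; ring
    _ ≤ (n + 1 : ℝ) ^ m * Real.exp ((n : ℝ) + 1) * r ^ n := by
        have h1 : (0:ℝ) ≤ (n + 1 : ℝ) ^ m := by positivity
        have h2 : (0:ℝ) ≤ r ^ n := by positivity
        exact mul_le_mul_of_nonneg_right (mul_le_mul_of_nonneg_left key2 h1) h2
    _ = Real.exp 1 / q * ((n + 1 : ℝ) ^ m * q ^ (n + 1)) := by
        rw [hexp, hq, mul_pow]
        have he := (Real.exp_pos 1).ne'
        field_simp
        ring

/-- for each `k ≥ 0` and `0 < x < 1`, `F k` is differentiable at `x`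
and `(x/(1−x))·(F k)'(x) = F (k+1) x`. -/
theorem stmt12 (k : ℕ) (x : ℝ) (hx0 : 0 < x) (hx1 : x < 1) :
    DifferentiableAt ℝ (F k) x ∧ x / (1 - x) * deriv (F k) x = F (k + 1) x := by
  set b : ℝ := (x + 1) / 2 with hbdef
  have hxb : x < b := by rw [hbdef]; linarith
  have hb0 : 0 < b := by rw [hbdef]; linarith
  have hb1 : b < 1 := by rw [hbdef]; linarith
  set r : ℝ := b * Real.exp (-b) with hrdef
  have hr0 : 0 < r := by positivity
  have hr1 : r < Real.exp (-1) := g_lt hb0.le hb1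
  -- coefficients and term functions
  set a : ℕ → ℝ := fun n => ((n + 1 : ℕ) ^ (n + k) / (n + 1).factorial : ℝ) with hadef
  have ha_pos : ∀ n, 0 < a n := fun n => by
    rw [hadef]; positivity
  set g : ℕ → ℝ → ℝ := fun n y => a n * (y * Real.exp (-y)) ^ (n + 1) with hgdef
  set g' : ℕ → ℝ → ℝ := fun n y =>
    a n * (((n : ℝ) + 1) * (y * Real.exp (-y)) ^ n * (Real.exp (-y) * (1 - y))) with hg'def
  set u : ℕ → ℝ := fun n => a n * ((n : ℝ) + 1) * r ^ n with hudef
  -- summability of the derivative bound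
  have hu : Summable u := by
    have h := summable_aux (k + 1) hr0 hr1
    refine h.congr (fun n => ?_)
    rw [hudef, hadef]
    push_cast
    rw [show n + (k + 1) = (n + k) + 1 by omega, pow_succ]
    ring
  -- derivative of each term
  have hderiv : ∀ n, ∀ y : ℝ, HasDerivAt (g n) (g' n y) y := by
    intro n y
    have h1 : HasDerivAt (fun y : ℝ => y * Real.exp (-y))
        (1 * Real.exp (-y) + y * (Real.exp (-y) * -1)) y := by
      exact (hasDerivAt_id y).mul ((hasDerivAt_id y).neg.exp)
    have h2 := (h1.pow (n + 1)).const_mul (a n)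
    convert h2 using 1
    · rfl
    · rfl
    · rfl
    rw [hg'def]
    simp only [Nat.add_sub_cancel]
    push_cast
    ring
  -- bound on the derivative in Ioo 0 b
  have hbound : ∀ n, ∀ y ∈ Set.Ioo (0 : ℝ) b, ‖g' n y‖ ≤ u n := by
    intro n y hy
    obtain ⟨hy0, hyb⟩ := hy
    have hgy0 : 0 ≤ y * Real.exp (-y) := by positivity
    have hgyr : y * Real.exp (-y) ≤ r := g_mono hy0.le hyb.le hb1.le
    have hE : Real.exp (-y) ≤ 1 := by
      rw [Real.exp_le_one_iff]; linarith
    have hE0 : 0 < Real.exp (-y) := Real.exp_pos _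
    have h1y : 0 ≤ 1 - y := by linarith [hyb.trans hb1]
    have habs : ‖g' n y‖ = a n * (((n : ℝ) + 1) * (y * Real.exp (-y)) ^ n
        * (Real.exp (-y) * (1 - y))) := by
      rw [Real.norm_eq_abs, abs_of_nonneg]
      have := (ha_pos n).le
      positivity
    rw [habs, hudef]
    have h2 : Real.exp (-y) * (1 - y) ≤ 1 := by nlinarith
    have h3 : (y * Real.exp (-y)) ^ n ≤ r ^ n := pow_le_pow_left₀ hgy0 hgyr n
    have := (ha_pos n).le
    calc a n * (((n : ℝ) + 1) * (y * Real.exp (-y)) ^ n * (Real.exp (-y) * (1 - y)))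
        ≤ a n * (((n : ℝ) + 1) * r ^ n * 1) := by
          apply mul_le_mul_of_nonneg_left _ this
          apply mul_le_mul
          · exact mul_le_mul_of_nonneg_left h3 (by positivity)
          · exact h2
          · positivity
          · positivity
      _ = a n * ((n : ℝ) + 1) * r ^ n := by ring
  -- summability at the base point x
  have hx_mem : x ∈ Set.Ioo (0 : ℝ) b := ⟨hx0, hxb⟩
  have hg0 : Summable (fun n => g n x) := by
    refine Summable.of_nonneg_of_le (fun n => ?_) (fun n => ?_) (hu.mul_right r)
    · rw [hgdef]; have := (ha_pos n).le; positivity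
    · have hgx0 : 0 ≤ x * Real.exp (-x) := by positivity
      have hgxr : x * Real.exp (-x) ≤ r := g_mono hx0.le hxb.le hb1.le
      have hn1 : (1 : ℝ) ≤ (n : ℝ) + 1 := by
        have : (0:ℝ) ≤ (n : ℝ) := Nat.cast_nonneg n
        linarith
      have := (ha_pos n).le
      calc g n x = a n * (x * Real.exp (-x)) ^ (n + 1) := rfl
        _ ≤ a n * r ^ (n + 1) := by
            apply mul_le_mul_of_nonneg_left _ this
            exact pow_le_pow_left₀ hgx0 hgxr (n + 1)
        _ = a n * 1 * r ^ n * r := by rw [pow_succ]; ring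
        _ ≤ a n * ((n : ℝ) + 1) * r ^ n * r := by
            have hrr : (0:ℝ) ≤ r ^ n := by positivity
            refine mul_le_mul_of_nonneg_right (mul_le_mul_of_nonneg_right ?_ hrr) hr0.le
            exact mul_le_mul_of_nonneg_left hn1 (ha_pos n).le
        _ = u n * r := rfl
  -- the main differentiation step
  have hF : HasDerivAt (F k) (∑' n, g' n x) x := by
    have := hasDerivAt_tsum_of_isPreconnected hu isOpen_Ioo
      (convex_Ioo (0:ℝ) b).isPreconnected
      (fun n y _ => hderiv n y) hbound hx_mem hg0 hx_mem
    exact this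
  refine ⟨hF.differentiableAt, ?_⟩
  rw [hF.deriv]
  rw [← tsum_mul_left]
  rw [show F (k + 1) x = ∑' n : ℕ,
    ((n + 1 : ℕ) ^ (n + (k + 1)) / (n + 1).factorial : ℝ) * (x * Real.exp (-x)) ^ (n + 1) from rfl]
  refine tsum_congr (fun n => ?_)
  rw [hg'def, hadef]
  have h1x : (1 : ℝ) - x ≠ 0 := by linarith
  push_cast
  rw [show n + (k + 1) = (n + k) + 1 by omega, pow_succ, pow_succ]
  field_simp
end

section
/- Fix a nonnegative integer k, and define C_k(m) = ∑_{D=1}^{m} (−1)^{m−D} D^{m+k−1} / ((m−D)! · D!) for each positive integer m. Then for every real number x with 0 ≤ x and x·e^{x+1} < 1, the series ∑_{m=1}^{∞} C_k(m)·x^m and ∑_{D=1}^{∞} (D^{D+k−1}/D!)·(x·e^{−x})^D both converge, and their sums are equal. -/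
/-- `C k m = ∑_{D=1}^m (−1)^{m−D} D^{m+k−1} / ((m−D)!·D!)`, as a real number. -/
noncomputable def C (k m : ℕ) : ℝ :=
  ∑ D ∈ Finset.Icc 1 m,
    ((-1 : ℝ)) ^ (m - D) * (D : ℝ) ^ (m + k - 1) / ((m - D).factorial * D.factorial)

lemma hasSum_exp_real (y : ℝ) :
    HasSum (fun n : ℕ => y ^ n / n.factorial) (Real.exp y) := by
  rw [Real.exp_eq_exp_ℝ]
  exact NormedSpace.expSeries_div_hasSum_exp y

lemma pow_div_factorial_le_exp (n : ℕ) :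
    ((n : ℝ)) ^ n / n.factorial ≤ Real.exp n :=
  le_hasSum (hasSum_exp_real (n : ℝ)) n (fun j _ => by positivity)

/-- for fixed `k` and `0 ≤ x` with `x·e^{x+1} < 1`, the series
`∑_{m=1}^∞ C_k(m)·x^m` and `∑_{D=1}^∞ (D^{D+k−1}/D!)·(x·e^{−x})^D` both converge,
with the same sum.  (Both series are indexed by `ℕ`, shifted by one.) -/
theorem stmt14 (k : ℕ) (x : ℝ) (hx0 : 0 ≤ x) (hx : x * Real.exp (x + 1) < 1) :
    ∃ S : ℝ,
      HasSum (fun j : ℕ => C k (j + 1) * x ^ (j + 1)) S ∧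
      HasSum
        (fun n : ℕ =>
          ((n + 1 : ℕ) ^ (n + k) / (n + 1).factorial : ℝ) * (x * Real.exp (-x)) ^ (n + 1))
        S := by
  set r : ℝ := x * Real.exp (x + 1) with hr
  have hr0 : 0 ≤ r := by positivity
  set g : ℕ × ℕ → ℝ := fun p =>
    (-1 : ℝ) ^ p.2 * ((p.1 : ℝ) + 1) ^ (p.1 + p.2 + k) * x ^ (p.1 + p.2 + 1) /
      (p.2.factorial * (p.1 + 1).factorial) with hgdef
  set c : ℕ → ℝ := fun D => ((D : ℝ) + 1) ^ (D + k) * x ^ (D + 1) / (D + 1).factorial with hcdef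
  -- absolute value of g
  have habs : ∀ p : ℕ × ℕ, |g p| =
      ((p.1 : ℝ) + 1) ^ (p.1 + p.2 + k) * x ^ (p.1 + p.2 + 1) /
        (p.2.factorial * (p.1 + 1).factorial) := by
    intro p
    have h1 : (0 : ℝ) ≤ (p.2.factorial : ℝ) * ((p.1 + 1).factorial : ℝ) := by positivity
    rw [hgdef]
    dsimp only
    rw [abs_div, abs_mul, abs_mul, abs_pow, abs_pow, abs_pow, abs_neg, abs_one, one_pow,
      one_mul, abs_of_nonneg (by positivity : (0:ℝ) ≤ (p.1 : ℝ) + 1), abs_of_nonneg hx0,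
      abs_of_nonneg h1]
  -- row sums (signed)
  have hrow : ∀ D : ℕ, HasSum (fun j => g (D, j)) (c D * Real.exp (-(((D : ℝ) + 1) * x))) := by
    intro D
    have h := (hasSum_exp_real (-(((D : ℝ) + 1) * x))).mul_left (c D)
    refine h.congr_fun fun j => ?_
    rw [hgdef, hcdef]
    dsimp only
    rw [show D + j + k = (D + k) + j by ring, show D + j + 1 = (D + 1) + j by ring,
      pow_add, pow_add,
      show (-(((D : ℝ) + 1) * x)) = (-1) * (((D : ℝ) + 1) * x) by ring, mul_pow, mul_pow]
    have hf1 : ((j.factorial : ℝ)) ≠ 0 := by positivity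
    have hf2 : (((D + 1).factorial : ℝ)) ≠ 0 := by positivity
    field_simp
    ring
  -- row sums (absolute)
  have hrowabs : ∀ D : ℕ, HasSum (fun j => |g (D, j)|)
      (c D * Real.exp (((D : ℝ) + 1) * x)) := by
    intro D
    have h := (hasSum_exp_real (((D : ℝ) + 1) * x)).mul_left (c D)
    refine h.congr_fun fun j => ?_
    rw [habs (D, j), hcdef]
    dsimp only
    rw [show D + j + k = (D + k) + j by ring, show D + j + 1 = (D + 1) + j by ring,
      pow_add, pow_add, mul_pow]
    have hf1 : ((j.factorial : ℝ)) ≠ 0 := by positivity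
    have hf2 : (((D + 1).factorial : ℝ)) ≠ 0 := by positivity
    field_simp
    ring
  -- bound on the row sums of |g|
  have hbound : ∀ D : ℕ, c D * Real.exp (((D : ℝ) + 1) * x) ≤ ((D : ℝ) + 1) ^ k * r ^ (D + 1) := by
    intro D
    have hfact : (0 : ℝ) < ((D + 1).factorial : ℝ) := by positivity
    have h1 : ((D : ℝ) + 1) ^ (D + 1) / ((D + 1).factorial : ℝ) ≤ Real.exp ((D : ℝ) + 1) := by
      have := pow_div_factorial_le_exp (D + 1)
      push_cast at this
      exact this
    have h2 : ((D : ℝ) + 1) ^ D / ((D + 1).factorial : ℝ) ≤ Real.exp ((D : ℝ) + 1) := by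
      refine le_trans ?_ h1
      gcongr
      · linarith
      · exact Nat.le_succ D
    have hexpx : Real.exp (((D : ℝ) + 1) * x) = Real.exp x ^ (D + 1) := by
      have := Real.exp_nat_mul x (D + 1)
      push_cast at this
      rw [← this]
    have he1 : Real.exp 1 ^ (D + 1) = Real.exp ((D : ℝ) + 1) := by
      have := Real.exp_nat_mul 1 (D + 1)
      push_cast at this
      rw [mul_one] at this
      exact this.symm
    calc c D * Real.exp (((D : ℝ) + 1) * x)
        = ((D : ℝ) + 1) ^ k * (((D : ℝ) + 1) ^ D / ((D + 1).factorial : ℝ)) *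
            (x ^ (D + 1) * Real.exp x ^ (D + 1)) := by
          rw [hcdef]; dsimp only; rw [hexpx, pow_add]; ring
      _ ≤ ((D : ℝ) + 1) ^ k * Real.exp ((D : ℝ) + 1) *
            (x ^ (D + 1) * Real.exp x ^ (D + 1)) := by
          gcongr
      _ = ((D : ℝ) + 1) ^ k * r ^ (D + 1) := by
          rw [hr, mul_pow, Real.exp_add x 1, mul_pow, ← he1]; ring
  -- summable majorant
  have hmaj : Summable (fun D : ℕ => ((D : ℝ) + 1) ^ k * r ^ (D + 1)) := by
    have h : Summable (fun n : ℕ => (n : ℝ) ^ k * r ^ n) := by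
      refine summable_pow_mul_geometric_of_norm_lt_one k ?_
      rwa [Real.norm_eq_abs, abs_of_nonneg hr0]
    have h' := (summable_nat_add_iff 1).2 h
    refine h'.congr fun D => ?_
    push_cast
    ring
  -- summability of |g| over ℕ × ℕ
  have hsumabs : Summable (fun p : ℕ × ℕ => |g p|) := by
    refine (summable_prod_of_nonneg (fun p => abs_nonneg _)).2 ⟨fun D => (hrowabs D).summable, ?_⟩
    have heq : (fun D => ∑' j, |g (D, j)|) =
        fun D => c D * Real.exp (((D : ℝ) + 1) * x) := funext fun D => (hrowabs D).tsum_eq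
    rw [heq]
    exact Summable.of_nonneg_of_le
      (fun D => by
        have := (hrowabs D); positivity)
      hbound hmaj
  have hsum : Summable g := summable_abs_iff.1 hsumabs
  set S : ℝ := ∑' p, g p with hS
  have hgS : HasSum g S := hsum.hasSum
  refine ⟨S, ?_, ?_⟩
  · -- first series: group by antidiagonals
    have hσ : HasSum (fun p : Σ n : ℕ, Finset.HasAntidiagonal.antidiagonal n => g p.2) S := by
      have := (Finset.HasAntidiagonal.sigmaAntidiagonalEquivProd (A := ℕ)).hasSum_iff.2 hgS
      exact this
    have hfiber : ∀ n : ℕ,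
        HasSum (fun p : (Finset.HasAntidiagonal.antidiagonal n : Finset (ℕ × ℕ)) => g p)
          (∑ p ∈ Finset.HasAntidiagonal.antidiagonal n, g p) := by
      intro n
      have := hasSum_fintype (fun p : (Finset.HasAntidiagonal.antidiagonal n : Finset (ℕ × ℕ)) => g p)
      rwa [Finset.sum_coe_sort] at this
    have h1 : HasSum (fun n : ℕ => ∑ p ∈ Finset.HasAntidiagonal.antidiagonal n, g p) S :=
      HasSum.sigma hσ hfiber
    have heq : (fun j : ℕ => C k (j + 1) * x ^ (j + 1)) =
        fun n : ℕ => ∑ p ∈ Finset.HasAntidiagonal.antidiagonal n, g p := by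
      funext n
      rw [Finset.Nat.sum_antidiagonal_eq_sum_range_succ_mk, C, Finset.sum_mul]
      rw [show Finset.Icc 1 (n + 1) =
          Finset.map ⟨fun a => a + 1, add_left_injective 1⟩ (Finset.range (n + 1)) by
        ext d
        simp only [Finset.mem_Icc, Finset.mem_map, Finset.mem_range,
          Function.Embedding.coeFn_mk]
        constructor
        · rintro ⟨h1, h2⟩; exact ⟨d - 1, by omega, by omega⟩
        · rintro ⟨a, ha, rfl⟩; omega]
      rw [Finset.sum_map]
      refine Finset.sum_congr rfl fun a ha => ?_
      rw [Finset.mem_range] at ha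
      have haln : a ≤ n := by omega
      simp only [Function.Embedding.coeFn_mk]
      rw [hgdef]
      dsimp only
      rw [show a + (n - a) + k = n + k by omega, show a + (n - a) + 1 = n + 1 by omega,
        show n + 1 - (a + 1) = n - a by omega, show n + 1 + k - 1 = n + k by omega]
      push_cast
      ring
    rw [heq]
    exact h1
  · -- second series: sum along rows
    have h2 := hgS.prod_fiberwise hrow
    have heq : (fun n : ℕ =>
        ((n + 1 : ℕ) ^ (n + k) / (n + 1).factorial : ℝ) * (x * Real.exp (-x)) ^ (n + 1)) =
        fun D : ℕ => c D * Real.exp (-(((D : ℝ) + 1) * x)) := by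
      funext n
      have hexpx : Real.exp (-(((n : ℝ) + 1) * x)) = Real.exp (-x) ^ (n + 1) := by
        have := Real.exp_nat_mul (-x) (n + 1)
        push_cast at this
        rw [← this]
        ring_nf
      rw [hcdef]
      dsimp only
      rw [hexpx, mul_pow]
      push_cast
      ring
    rw [heq]
    exact h2
end

section
/- For every integer d ≥ 1, the following identity of rational numbers holds: ∑_{D=1}^{5d−3} [ (−1)^{5d−2−D} · D^{5d−2} / ((5d−3−D)! · D!) ] · ( 375d^3 + 225d^2 − 355d + 84 − (5d−3)·5d·(5d+8)/D − D·(75d^2 − 15d + 32) + 4D^2 ) = 109375d^6/24 − 315625d^5/24 + 246875d^4/24 + 125d^3/24 − 12225d^2/4 + 3820d/3 − 188. -/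
open Finset

/-- Alternating moment sum. -/
def Fm (n k : ℕ) : ℚ :=
  ∑ D ∈ Finset.range (n + 1), (-1 : ℚ) ^ (n - D) * (n.choose D : ℚ) * (D : ℚ) ^ k

lemma neg_one_pow_sub (n D : ℕ) (h : D ≤ n) :
    (-1 : ℚ) ^ (n - D) = (-1) ^ n * (-1) ^ D := by
  have h1 : (-1 : ℚ) ^ n = (-1) ^ (n - D) * (-1) ^ D := by
    rw [← pow_add, Nat.sub_add_cancel h]
  have h2 : (-1 : ℚ) ^ (D + D) = 1 := by
    rw [← two_mul, pow_mul]; norm_num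
  rw [h1, mul_assoc, ← pow_add, h2, mul_one]

lemma Fm_succ (n k : ℕ) :
    Fm (n + 1) (k + 1) =
      (n + 1 : ℚ) * ∑ j ∈ Finset.range (k + 1), (k.choose j : ℚ) * Fm n j := by
  have step : ∀ E ∈ Finset.range (n + 1),
      (-1 : ℚ) ^ (n + 1 - (E + 1)) * ((n + 1).choose (E + 1) : ℚ) * ((E : ℚ) + 1) ^ (k + 1)
        = (n + 1 : ℚ) * ∑ j ∈ Finset.range (k + 1),
            (k.choose j : ℚ) * ((-1 : ℚ) ^ (n - E) * (n.choose E : ℚ) * (E : ℚ) ^ j) := by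
    intro E _
    have hch : ((n + 1).choose (E + 1) : ℚ) * (E + 1) = (n + 1) * (n.choose E : ℚ) := by
      have := Nat.add_one_mul_choose_eq n E
      exact_mod_cast congrArg (Nat.cast : ℕ → ℚ) this.symm
    have hbin : ((E : ℚ) + 1) ^ k = ∑ j ∈ Finset.range (k + 1), (k.choose j : ℚ) * (E : ℚ) ^ j := by
      have := add_pow (E : ℚ) 1 k
      simp only [one_pow, mul_one] at this
      rw [this]
      exact Finset.sum_congr rfl fun j _ => by ring
    have hsub : n + 1 - (E + 1) = n - E := by omega
    rw [hsub, pow_succ]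
    calc (-1:ℚ)^(n-E) * (((n+1).choose (E+1):ℚ)) * (((E:ℚ)+1)^k * ((E:ℚ)+1))
        = (-1:ℚ)^(n-E) * (((E:ℚ)+1)^k * (((n+1).choose (E+1):ℚ) * ((E:ℚ)+1))) := by ring
      _ = (-1:ℚ)^(n-E) * (((E:ℚ)+1)^k * ((n+1) * (n.choose E : ℚ))) := by rw [hch]
      _ = (n+1:ℚ) * ((-1:ℚ)^(n-E) * (n.choose E : ℚ) * ((E:ℚ)+1)^k) := by ring
      _ = (n+1:ℚ) * ∑ j ∈ Finset.range (k+1), (k.choose j : ℚ) *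
            ((-1:ℚ)^(n-E) * (n.choose E : ℚ) * (E:ℚ)^j) := by
          rw [hbin, Finset.mul_sum]
          congr 1
          exact Finset.sum_congr rfl fun j _ => by ring
  calc Fm (n + 1) (k + 1)
      = ∑ E ∈ Finset.range (n + 1),
          (-1 : ℚ) ^ (n + 1 - (E + 1)) * ((n + 1).choose (E + 1) : ℚ) * ((E : ℚ) + 1) ^ (k + 1) := by
        rw [Fm, Finset.sum_range_succ']
        simp
    _ = ∑ E ∈ Finset.range (n + 1), (n + 1 : ℚ) * ∑ j ∈ Finset.range (k + 1),
          (k.choose j : ℚ) * ((-1 : ℚ) ^ (n - E) * (n.choose E : ℚ) * (E : ℚ) ^ j) :=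
        Finset.sum_congr rfl step
    _ = (n + 1 : ℚ) * ∑ j ∈ Finset.range (k + 1), (k.choose j : ℚ) * Fm n j := by
        rw [← Finset.mul_sum, Finset.sum_comm]
        congr 1
        refine Finset.sum_congr rfl fun j _ => ?_
        rw [Fm, Finset.mul_sum]

lemma Fm_zero (n : ℕ) (hn : 1 ≤ n) : Fm n 0 = 0 := by
  have h : ∑ i ∈ Finset.range (n + 1), (-1 : ℚ) ^ i * (n.choose i : ℚ) = 0 := by
    have h2 := Int.alternating_sum_range_choose (n := n)
    rw [if_neg (by omega)] at h2
    exact_mod_cast congrArg (Int.cast : ℤ → ℚ) h2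
  have : Fm n 0 = (-1 : ℚ) ^ n * ∑ i ∈ Finset.range (n + 1), (-1 : ℚ) ^ i * (n.choose i : ℚ) := by
    rw [Fm, Finset.mul_sum]
    refine Finset.sum_congr rfl fun D hD => ?_
    rw [neg_one_pow_sub n D (by simpa [Nat.lt_succ_iff] using hD)]
    ring
  rw [this, h, mul_zero]

lemma Fm_lt : ∀ n k : ℕ, k < n → Fm n k = 0 := by
  intro n
  induction n with
  | zero => intro k hk; omega
  | succ n ih =>
    intro k hk
    cases k with
    | zero => exact Fm_zero (n + 1) (by omega)
    | succ k =>
      rw [Fm_succ]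
      have : ∑ j ∈ Finset.range (k + 1), (k.choose j : ℚ) * Fm n j = 0 := by
        refine Finset.sum_eq_zero fun j hj => ?_
        rw [ih j (by simp [Nat.lt_succ_iff] at hj; omega), mul_zero]
      rw [this, mul_zero]

lemma Fm_diag : ∀ n : ℕ, Fm n n = n.factorial := by
  intro n
  induction n with
  | zero => simp [Fm]
  | succ n ih =>
    rw [show n + 1 = n + 1 from rfl, Fm_succ, Finset.sum_range_succ]
    have h0 : ∑ j ∈ Finset.range n, (n.choose j : ℚ) * Fm n j = 0 :=
      Finset.sum_eq_zero fun j hj => by rw [Fm_lt n j (Finset.mem_range.mp hj), mul_zero]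
    rw [h0, zero_add, Nat.choose_self, ih]
    push_cast [Nat.factorial_succ]
    ring

lemma cast_choose_two : ∀ n : ℕ, (((n + 2).choose n : ℕ) : ℚ) = (n + 1) * (n + 2) / 2 := by
  intro n
  induction n with
  | zero => norm_num
  | succ n ih =>
    have h : (n + 3).choose (n + 1) = (n + 2).choose n + (n + 2).choose (n + 1) :=
      Nat.choose_succ_succ (n + 2) n
    rw [show n + 1 + 2 = n + 3 from rfl, h]
    push_cast [Nat.choose_succ_self_right, ih]
    ring

lemma cast_choose_three : ∀ n : ℕ, (((n + 3).choose n : ℕ) : ℚ) = (n + 1) * (n + 2) * (n + 3) / 6 := by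
  intro n
  induction n with
  | zero => norm_num
  | succ n ih =>
    have h : (n + 4).choose (n + 1) = (n + 3).choose n + (n + 3).choose (n + 1) :=
      Nat.choose_succ_succ (n + 3) n
    rw [show n + 1 + 3 = n + 4 from rfl, h]
    have h2 := cast_choose_two (n + 1)
    push_cast [ih] at *
    rw [show ((n:ℚ)+1+2) = (n+3) by ring] at h2
    rw [h2]
    ring

lemma Fm_s1 : ∀ n : ℕ, Fm n (n + 1) = n.factorial * ((n : ℚ) * (n + 1) / 2) := by
  intro n
  induction n with
  | zero => simp [Fm]
  | succ n ih =>
    rw [show n + 1 + 1 = (n + 1) + 1 from rfl, Fm_succ, Finset.sum_range_succ,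
      Finset.sum_range_succ]
    have h0 : ∑ j ∈ Finset.range n, ((n + 1).choose j : ℚ) * Fm n j = 0 :=
      Finset.sum_eq_zero fun j hj => by rw [Fm_lt n j (Finset.mem_range.mp hj), mul_zero]
    rw [h0, zero_add, Nat.choose_succ_self_right, Nat.choose_self, Fm_diag, ih]
    push_cast [Nat.factorial_succ]
    ring

lemma Fm_s2 : ∀ n : ℕ, Fm n (n + 2)
    = n.factorial * ((n : ℚ) * (n + 1) * (n + 2) * (3 * n + 1) / 24) := by
  intro n
  induction n with
  | zero => simp [Fm]
  | succ n ih =>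
    rw [show n + 1 + 2 = (n + 1) + 1 + 1 from rfl, Fm_succ, Finset.sum_range_succ,
      Finset.sum_range_succ, Finset.sum_range_succ]
    have h0 : ∑ j ∈ Finset.range n, ((n + 2).choose j : ℚ) * Fm n j = 0 :=
      Finset.sum_eq_zero fun j hj => by rw [Fm_lt n j (Finset.mem_range.mp hj), mul_zero]
    rw [h0, zero_add, Nat.choose_self, Fm_diag, ih, Fm_s1,
      show (n + 2) = n + 1 + 1 from rfl, Nat.choose_succ_self_right]
    rw [show n + 1 + 1 = n + 2 from rfl, cast_choose_two]
    push_cast [Nat.factorial_succ]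
    ring

lemma Fm_s3 : ∀ n : ℕ, Fm n (n + 3)
    = n.factorial * ((n : ℚ) ^ 2 * (n + 1) ^ 2 * (n + 2) * (n + 3) / 48) := by
  intro n
  induction n with
  | zero => simp [Fm]
  | succ n ih =>
    rw [show n + 1 + 3 = (n + 1) + 1 + 1 + 1 from rfl, Fm_succ, Finset.sum_range_succ,
      Finset.sum_range_succ, Finset.sum_range_succ, Finset.sum_range_succ]
    have h0 : ∑ j ∈ Finset.range n, ((n + 3).choose j : ℚ) * Fm n j = 0 :=
      Finset.sum_eq_zero fun j hj => by rw [Fm_lt n j (Finset.mem_range.mp hj), mul_zero]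
    have hc2 : (((n + 3).choose (n + 1) : ℕ) : ℚ) = (n + 2) * (n + 3) / 2 := by
      have := cast_choose_two (n + 1)
      rw [show n + 1 + 2 = n + 3 from rfl] at this
      rw [this]; push_cast; ring
    rw [h0, zero_add, Nat.choose_self, Fm_diag, ih, Fm_s1, Fm_s2,
      show ((n+3).choose (n+2)) = ((n+2)+1).choose (n+2) from rfl, Nat.choose_succ_self_right,
      cast_choose_three, hc2]
    push_cast [Nat.factorial_succ]
    ring

lemma main_sum (n : ℕ) (hn : 1 ≤ n) (A B C : ℚ) :
    ∑ D ∈ Finset.Icc 1 n,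
        (-1 : ℚ) ^ (n + 1 - D) * (D : ℚ) ^ (n + 1) /
            ((n - D).factorial * D.factorial) *
          (A - B / (D : ℚ) - (D : ℚ) * C + 4 * (D : ℚ) ^ 2) =
      -(A * ((n : ℚ) * (n + 1) / 2) - B -
          C * ((n : ℚ) * (n + 1) * (n + 2) * (3 * n + 1) / 24) +
          4 * ((n : ℚ) ^ 2 * (n + 1) ^ 2 * (n + 2) * (n + 3) / 48)) := by
  have hfacn : (n.factorial : ℚ) ≠ 0 := by exact_mod_cast n.factorial_ne_zero
  have hrange : Finset.range (n + 1) = insert 0 (Finset.Icc 1 n) := by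
    ext x; simp [Nat.lt_succ_iff]; omega
  have hF : ∀ k, 1 ≤ k → Fm n k =
      ∑ D ∈ Finset.Icc 1 n, (-1 : ℚ) ^ (n - D) * (n.choose D : ℚ) * (D : ℚ) ^ k := by
    intro k hk
    rw [Fm, hrange, Finset.sum_insert (by simp)]
    rw [show ((0 : ℕ) : ℚ) ^ k = 0 from by
      rw [Nat.cast_zero, zero_pow (by omega : k ≠ 0)]]
    ring
  have h1 : ∑ D ∈ Finset.Icc 1 n,
        (-1 : ℚ) ^ (n + 1 - D) * (D : ℚ) ^ (n + 1) /
            ((n - D).factorial * D.factorial) *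
          (A - B / (D : ℚ) - (D : ℚ) * C + 4 * (D : ℚ) ^ 2) =
      ∑ D ∈ Finset.Icc 1 n,
        (-1 : ℚ) ^ (n - D) * (n.choose D : ℚ) *
          (-(A * (D : ℚ) ^ (n + 1) - B * (D : ℚ) ^ n - C * (D : ℚ) ^ (n + 2) +
              4 * (D : ℚ) ^ (n + 3))) / n.factorial := by
    refine Finset.sum_congr rfl fun D hD => ?_
    obtain ⟨hD1, hDn⟩ := Finset.mem_Icc.mp hD
    have hD0 : (D : ℚ) ≠ 0 := by exact_mod_cast (by omega : D ≠ 0)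
    have hfac : ((n.choose D : ℚ)) * (D.factorial : ℚ) * ((n - D).factorial : ℚ)
        = (n.factorial : ℚ) := by
      exact_mod_cast congrArg (Nat.cast : ℕ → ℚ)
        (Nat.choose_mul_factorial_mul_factorial hDn)
    have hch0 : ((n.choose D : ℚ)) ≠ 0 := by
      exact_mod_cast Nat.choose_pos hDn |>.ne'
    have hf1 : ((n - D).factorial : ℚ) ≠ 0 := by exact_mod_cast (n - D).factorial_ne_zero
    have hf2 : (D.factorial : ℚ) ≠ 0 := by exact_mod_cast D.factorial_ne_zero
    have hsign : (-1 : ℚ) ^ (n + 1 - D) = -(-1 : ℚ) ^ (n - D) := by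
      rw [show n + 1 - D = (n - D) + 1 by omega, pow_succ]; ring
    rw [hsign, ← hfac]
    field_simp
    ring
  rw [h1, ← Finset.sum_div]
  have h2 : ∑ D ∈ Finset.Icc 1 n,
        (-1 : ℚ) ^ (n - D) * (n.choose D : ℚ) *
          (-(A * (D : ℚ) ^ (n + 1) - B * (D : ℚ) ^ n - C * (D : ℚ) ^ (n + 2) +
              4 * (D : ℚ) ^ (n + 3))) =
      -(A * Fm n (n + 1) - B * Fm n n - C * Fm n (n + 2) + 4 * Fm n (n + 3)) := by
    rw [hF (n + 1) (by omega), hF n hn, hF (n + 2) (by omega), hF (n + 3) (by omega),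
      Finset.mul_sum, Finset.mul_sum, Finset.mul_sum, Finset.mul_sum,
      ← Finset.sum_sub_distrib, ← Finset.sum_sub_distrib, ← Finset.sum_add_distrib,
      ← Finset.sum_neg_distrib]
    exact Finset.sum_congr rfl fun D hD => by ring
  rw [h2, Fm_diag, Fm_s1, Fm_s2, Fm_s3]
  field_simp

/-- for every integer `d ≥ 1`,
`∑_{D=1}^{5d−3} (−1)^{5d−2−D}·D^{5d−2}/((5d−3−D)!·D!) ·
  (375d³ + 225d² − 355d + 84 − (5d−3)·5d·(5d+8)/D − D·(75d² − 15d + 32) + 4D²)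
= 109375d⁶/24 − 315625d⁵/24 + 246875d⁴/24 + 125d³/24 − 12225d²/4 + 3820d/3 − 188`. -/
theorem stmt16 (d : ℕ) (hd : 1 ≤ d) :
    ∑ D ∈ Finset.Icc 1 (5 * d - 3),
        ((-1 : ℚ)) ^ (5 * d - 2 - D) * (D : ℚ) ^ (5 * d - 2) /
            ((5 * d - 3 - D).factorial * D.factorial) *
          (375 * (d : ℚ) ^ 3 + 225 * (d : ℚ) ^ 2 - 355 * (d : ℚ) + 84 -
              (5 * (d : ℚ) - 3) * (5 * (d : ℚ)) * (5 * (d : ℚ) + 8) / (D : ℚ) -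
              (D : ℚ) * (75 * (d : ℚ) ^ 2 - 15 * (d : ℚ) + 32) + 4 * (D : ℚ) ^ 2) =
      109375 * (d : ℚ) ^ 6 / 24 - 315625 * (d : ℚ) ^ 5 / 24 + 246875 * (d : ℚ) ^ 4 / 24 +
        125 * (d : ℚ) ^ 3 / 24 - 12225 * (d : ℚ) ^ 2 / 4 + 3820 * (d : ℚ) / 3 - 188 := by
  have h3 : (3 : ℕ) ≤ 5 * d := by omega
  have hn : 1 ≤ 5 * d - 3 := by omega
  have hcast : ((5 * d - 3 : ℕ) : ℚ) = 5 * (d : ℚ) - 3 := by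
    push_cast [h3]; ring
  have key := main_sum (5 * d - 3) hn
    (375 * (d : ℚ) ^ 3 + 225 * (d : ℚ) ^ 2 - 355 * (d : ℚ) + 84)
    ((5 * (d : ℚ) - 3) * (5 * (d : ℚ)) * (5 * (d : ℚ) + 8))
    (75 * (d : ℚ) ^ 2 - 15 * (d : ℚ) + 32)
  rw [show 5 * d - 2 = (5 * d - 3) + 1 by omega, key, hcast]
  ring
end

section
/- For every integer d ≥ 1, the following identity of rational numbers holds: ∑_{D=1}^{5d−2} [ (−1)^{5d−1−D} · D^{5d−1} / ((5d−2−D)! · D!) ] · ( (−625d^4 + 1125d^3 − 750d^2 + 160d)/(2D) + (1875d^4 − 3500d^3 + 2475d^2 − 680d + 64)/2 + (25d^2 + 35d − 28)·D − 4D^2 ) = −296875d^6/24 + 640625d^5/24 − 591875d^4/24 + 287375d^3/24 − 12575d^2/4 + 1330d/3 − 32. -/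
open Finset

def gp (m n : ℕ) : ℚ := ∑ D ∈ range (n+1), (-1)^D * (n.choose D : ℚ) * (D:ℚ)^m

lemma gp_zero (n : ℕ) : gp 0 n = if n = 0 then 1 else 0 := by
  have h := Int.alternating_sum_range_choose (n := n)
  unfold gp
  rw [show (if n = 0 then (1:ℚ) else 0) = ((if n = 0 then (1:ℤ) else 0 : ℤ) : ℚ) by
    split <;> simp, ← h]
  push_cast
  simp

lemma gp_rec (m n : ℕ) : gp (m+1) (n+1) = (n+1 : ℚ) * (gp m (n+1) - gp m n) := by
  have key : ∀ E : ℕ, (((n+1).choose (E+1) : ℚ)) * ((E:ℚ)+1)^(m+1)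
      = (n+1 : ℚ) * (n.choose E : ℚ) * ((E:ℚ)+1)^m := by
    intro E
    have h' : ((n:ℚ)+1) * (n.choose E : ℚ) = ((n+1).choose (E+1) : ℚ) * ((E:ℚ)+1) := by
      exact_mod_cast congrArg (Nat.cast : ℕ → ℚ) (Nat.add_one_mul_choose_eq n E)
    linear_combination (-(((E:ℚ)+1)^m)) * h'
  have L : gp (m+1) (n+1)
      = ∑ E ∈ range (n+1), (-1)^(E+1) * ((n+1).choose (E+1) : ℚ) * ((E:ℚ)+1)^(m+1) := by
    unfold gp
    rw [Finset.sum_range_succ']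
    push_cast
    simp
  have S1 : gp m (n+1)
      = (∑ E ∈ range (n+1), (-1)^(E+1) * ((n+1).choose (E+1) : ℚ) * ((E:ℚ)+1)^m)
        + (0:ℚ)^m := by
    unfold gp
    rw [Finset.sum_range_succ']
    push_cast
    simp
  have S2' : gp m n
      = (∑ E ∈ range n, (-1)^(E+1) * (n.choose (E+1) : ℚ) * ((E:ℚ)+1)^m) + (0:ℚ)^m := by
    unfold gp
    rw [Finset.sum_range_succ']
    push_cast
    simp
  have top : (∑ E ∈ range (n+1), (-1:ℚ)^(E+1) * (n.choose (E+1) : ℚ) * ((E:ℚ)+1)^m)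
      = ∑ E ∈ range n, (-1)^(E+1) * (n.choose (E+1) : ℚ) * ((E:ℚ)+1)^m := by
    rw [Finset.sum_range_succ]
    simp
  calc gp (m+1) (n+1)
      = ∑ E ∈ range (n+1), (-1)^(E+1) * ((n+1).choose (E+1) : ℚ) * ((E:ℚ)+1)^(m+1) := L
    _ = ∑ E ∈ range (n+1), (-(n+1:ℚ)) * ((-1)^E * (n.choose E : ℚ) * ((E:ℚ)+1)^m) := by
        refine Finset.sum_congr rfl fun E _ => ?_
        rw [show ((-1:ℚ))^(E+1) * ((n+1).choose (E+1) : ℚ) * ((E:ℚ)+1)^(m+1)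
            = (-1)^(E+1) * (((n+1).choose (E+1) : ℚ) * ((E:ℚ)+1)^(m+1)) by ring, key E]
        ring
    _ = (-(n+1:ℚ)) * ∑ E ∈ range (n+1), (-1)^E * (n.choose E : ℚ) * ((E:ℚ)+1)^m := by
        rw [← Finset.mul_sum]
    _ = (n+1 : ℚ) * (gp m (n+1) - gp m n) := by
        have pas : ∀ E ∈ range (n+1), ((-1:ℚ))^E * (n.choose E : ℚ) * ((E:ℚ)+1)^m
            = ((-1)^(E+1) * (n.choose (E+1) : ℚ) * ((E:ℚ)+1)^m)
              - ((-1)^(E+1) * ((n+1).choose (E+1) : ℚ) * ((E:ℚ)+1)^m) := by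
          intro E _
          have hp : ((n+1).choose (E+1) : ℚ) = (n.choose E : ℚ) + (n.choose (E+1) : ℚ) := by
            exact_mod_cast congrArg (Nat.cast : ℕ → ℚ) (Nat.choose_succ_succ n E)
          rw [hp]; ring
        rw [Finset.sum_congr rfl pas, Finset.sum_sub_distrib, top]
        linear_combination (-(n:ℚ)-1) * S1 + ((n:ℚ)+1) * S2'

lemma gp_vanish : ∀ m n : ℕ, m < n → gp m n = 0 := by
  intro m
  induction m with
  | zero => intro n hn; rw [gp_zero, if_neg (by omega)]
  | succ m ih =>
      intro n hn
      obtain ⟨k, rfl⟩ : ∃ k, n = k + 1 := ⟨n - 1, by omega⟩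
      rw [gp_rec, ih (k+1) (by omega), ih k (by omega)]
      ring

lemma gp_diag (n : ℕ) : gp n n = (-1)^n * n.factorial := by
  induction n with
  | zero => rw [gp_zero]; simp
  | succ n ih =>
      rw [gp_rec, gp_vanish n (n+1) (by omega), ih, Nat.factorial_succ]
      push_cast
      ring

lemma gp1 (n : ℕ) : gp (n+1) n = (-1)^n * n.factorial * ((n:ℚ)*(n+1)/2) := by
  induction n with
  | zero => unfold gp; simp
  | succ n ih =>
      rw [show n+1+1 = (n+1)+1 from rfl, gp_rec, gp_diag (n+1), ih, Nat.factorial_succ]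
      push_cast
      ring

lemma gp2 (n : ℕ) : gp (n+2) n
    = (-1)^n * n.factorial * ((n:ℚ)*(n+1)*(n+2)*(3*n+1)/24) := by
  induction n with
  | zero => unfold gp; simp
  | succ n ih =>
      rw [show n+1+2 = (n+2)+1 from rfl, gp_rec, show n+2 = (n+1)+1 from rfl, gp1 (n+1),
        ih, Nat.factorial_succ]
      push_cast
      ring

lemma gp3 (n : ℕ) : gp (n+3) n
    = (-1)^n * n.factorial * ((n:ℚ)^2*(n+1)^2*(n+2)*(n+3)/48) := by
  induction n with
  | zero => unfold gp; simp
  | succ n ih =>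
      rw [show n+1+3 = (n+3)+1 from rfl, gp_rec, show n+3 = (n+1)+2 from rfl, gp2 (n+1),
        ih, Nat.factorial_succ]
      push_cast
      ring

lemma sum_Icc_eq_gp (m n : ℕ) (hm : 1 ≤ m) :
    ∑ D ∈ Finset.Icc 1 n, (-1)^D * (n.choose D : ℚ) * (D:ℚ)^m = gp m n := by
  unfold gp
  rw [Finset.range_eq_Ico, Finset.sum_eq_sum_Ico_succ_bot (by omega),
    ← Finset.Ico_add_one_right_eq_Icc]
  simp [zero_pow (by omega : m ≠ 0)]


/-- for every integer `d ≥ 1`,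
`∑_{D=1}^{5d−2} (−1)^{5d−1−D}·D^{5d−1}/((5d−2−D)!·D!) ·
  ((−625d⁴ + 1125d³ − 750d² + 160d)/(2D) + (1875d⁴ − 3500d³ + 2475d² − 680d + 64)/2
    + (25d² + 35d − 28)·D − 4D²)
= −296875d⁶/24 + 640625d⁵/24 − 591875d⁴/24 + 287375d³/24 − 12575d²/4 + 1330d/3 − 32`. -/
theorem stmt17 (d : ℕ) (hd : 1 ≤ d) :
    ∑ D ∈ Finset.Icc 1 (5 * d - 2),
        ((-1 : ℚ)) ^ (5 * d - 1 - D) * (D : ℚ) ^ (5 * d - 1) /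
            ((5 * d - 2 - D).factorial * D.factorial) *
          ((-625 * (d : ℚ) ^ 4 + 1125 * (d : ℚ) ^ 3 - 750 * (d : ℚ) ^ 2 + 160 * (d : ℚ)) /
              (2 * (D : ℚ)) +
            (1875 * (d : ℚ) ^ 4 - 3500 * (d : ℚ) ^ 3 + 2475 * (d : ℚ) ^ 2 - 680 * (d : ℚ) + 64) /
              2 +
            (25 * (d : ℚ) ^ 2 + 35 * (d : ℚ) - 28) * (D : ℚ) - 4 * (D : ℚ) ^ 2) =
      -296875 * (d : ℚ) ^ 6 / 24 + 640625 * (d : ℚ) ^ 5 / 24 - 591875 * (d : ℚ) ^ 4 / 24 +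
        287375 * (d : ℚ) ^ 3 / 24 - 12575 * (d : ℚ) ^ 2 / 4 + 1330 * (d : ℚ) / 3 - 32 := by
  set n : ℕ := 5 * d - 2 with hn
  set A : ℚ := -625 * (d : ℚ) ^ 4 + 1125 * (d : ℚ) ^ 3 - 750 * (d : ℚ) ^ 2 + 160 * (d : ℚ) with hA
  set B : ℚ := 1875 * (d : ℚ) ^ 4 - 3500 * (d : ℚ) ^ 3 + 2475 * (d : ℚ) ^ 2 - 680 * (d : ℚ) + 64 with hB
  set C : ℚ := 25 * (d : ℚ) ^ 2 + 35 * (d : ℚ) - 28 with hC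
  have hcast : (n : ℚ) = 5 * (d : ℚ) - 2 := by
    rw [hn]; push_cast [Nat.cast_sub (by omega : 2 ≤ 5 * d)]; ring
  have key : ∀ D ∈ Finset.Icc 1 n,
      ((-1 : ℚ)) ^ (5 * d - 1 - D) * (D : ℚ) ^ (5 * d - 1) /
            ((n - D).factorial * D.factorial) *
          (A / (2 * (D : ℚ)) + B / 2 + C * (D : ℚ) - 4 * (D : ℚ) ^ 2)
      = (-(-1:ℚ)^n * (n.factorial : ℚ)⁻¹ * (A/2)) * ((-1)^D * (n.choose D : ℚ) * (D:ℚ)^n)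
        + (-(-1:ℚ)^n * (n.factorial : ℚ)⁻¹ * (B/2)) * ((-1)^D * (n.choose D : ℚ) * (D:ℚ)^(n+1))
        + (-(-1:ℚ)^n * (n.factorial : ℚ)⁻¹ * C) * ((-1)^D * (n.choose D : ℚ) * (D:ℚ)^(n+2))
        - (-(-1:ℚ)^n * (n.factorial : ℚ)⁻¹ * 4) * ((-1)^D * (n.choose D : ℚ) * (D:ℚ)^(n+3)) := by
    intro D hD
    rw [Finset.mem_Icc] at hD
    obtain ⟨hD1, hDn⟩ := hD
    have hexp : 5 * d - 1 = n + 1 := by omega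
    have hsub : 5 * d - 1 - D = (n - D) + 1 := by omega
    have hsq : ((-1:ℚ))^D * (-1)^D = 1 := by
      rw [← pow_add]; exact Even.neg_one_pow ⟨D, rfl⟩
    have hsign : ((-1:ℚ)) ^ (5 * d - 1 - D) = -((-1)^n * (-1)^D) := by
      have h1 : ((-1:ℚ))^(n-D) * (-1)^D = (-1)^n := by
        rw [← pow_add]; congr 1; omega
      calc ((-1:ℚ)) ^ (5*d-1-D) = -((-1:ℚ))^(n-D) := by rw [hsub, pow_succ]; ring
        _ = -(((-1:ℚ))^(n-D) * ((-1)^D * (-1)^D)) := by rw [hsq]; ring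
        _ = -((-1:ℚ)^n * (-1)^D) := by rw [← mul_assoc, h1]
    have hfac : ((n.factorial : ℚ)) = (n.choose D : ℚ) * D.factorial * (n - D).factorial := by
      exact_mod_cast (Nat.choose_mul_factorial_mul_factorial hDn).symm
    have hD0 : (D:ℚ) ≠ 0 := by positivity
    have hf1 : ((n-D).factorial : ℚ) ≠ 0 := by positivity
    have hf2 : ((D.factorial) : ℚ) ≠ 0 := by positivity
    have hnf : ((n.factorial) : ℚ) ≠ 0 := by positivity
    rw [hsign, hexp]
    rw [div_add_div _ _ (by positivity) (by norm_num : (2:ℚ) ≠ 0)]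
    field_simp
    rw [hfac]
    ring
  rw [Finset.sum_congr rfl key]
  have hn1 : 1 ≤ n := by omega
  simp only [Finset.sum_add_distrib, Finset.sum_sub_distrib, ← Finset.mul_sum]
  rw [sum_Icc_eq_gp n n (by omega), sum_Icc_eq_gp (n+1) n (by omega),
    sum_Icc_eq_gp (n+2) n (by omega), sum_Icc_eq_gp (n+3) n (by omega),
    gp_diag, gp1, gp2, gp3]
  have hnf : ((n.factorial) : ℚ) ≠ 0 := by positivity
  have hsq : ((-1:ℚ))^n * (-1)^n = 1 := by
    rw [← pow_add]; exact Even.neg_one_pow ⟨n, rfl⟩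
  field_simp
  rw [hcast, hA, hB, hC]
  ring_nf
  ring_nf at hsq
  simp only [hsq]
  ring
end
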